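/- arXiv:1809.10715 — 7 statements merged into one kernel-verified Lean document; each statement's English description precedes it below -/
import Mathlib

section
/- Let ε and ε′ be two non-parallel straight lines in ℝ², with ε′ containing the origin. Then there exist a line segment I ⊆ ε, an origin-symmetric line segment I′ ⊆ ε′ of the same length as I, and an origin-symmetric convex body K ⊆ ℝ² such that I ⊆ K but I′ ⊄ K. -/
open Set MeasureTheory Metric Pointwise

noncomputable section

/-- Euclidean space `ℝⁿ`. -/
abbrev Euc (n : ℕ) := EuclideanSpace ℝ (Fin n)

/-- The orthogonal projection onto `H`, as a self-map `x ↦ x|H` of the ambient space. -/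
def projS {n : ℕ} (H : Submodule ℝ (Euc n)) (x : Euc n) : Euc n :=
  (H.orthogonalProjection x : Euc n)

/-- The reflection with respect to the subspace `H` : `x ↦ 2(x|H) − x`. -/
def reflS {n : ℕ} (H : Submodule ℝ (Euc n)) (x : Euc n) : Euc n :=
  (2 : ℝ) • projS H x - x

/-- `A` is symmetric with respect to the subspace `H`. -/
def SymmWrt {n : ℕ} (H : Submodule ℝ (Euc n)) (A : Set (Euc n)) : Prop :=
  reflS H '' A = A

/-- The orthogonal projection `A|H` of a set `A` onto `H`. -/
def pimg {n : ℕ} (H : Submodule ℝ (Euc n)) (A : Set (Euc n)) : Set (Euc n) :=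
  projS H '' A

/-- The `H`-symmetric spherical cylinder `(r(B∩H)+x)+s(B∩H^⊥)`. -/
def cylSet {n : ℕ} (H : Submodule ℝ (Euc n)) (r s : ℝ) (x : Euc n) : Set (Euc n) :=
  (fun y => x + y) '' (r • (closedBall (0 : Euc n) 1 ∩ (H : Set (Euc n)))
    + s • (closedBall (0 : Euc n) 1 ∩ ((Hᗮ : Submodule ℝ (Euc n)) : Set (Euc n))))

/-- Convex bodies of `ℝⁿ`: compact convex sets with nonempty interior. -/
abbrev FullBody (n : ℕ) := {K : ConvexBody (Euc n) // (interior (K : Set (Euc n))).Nonempty}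

/-- `L` is a convex body in the subspace `H`: a compact convex subset of `H` with
nonempty interior relative to `H`. -/
def IsBodyIn {n : ℕ} (H : Submodule ℝ (Euc n)) (L : Set (Euc n)) : Prop :=
  L ⊆ (H : Set (Euc n)) ∧ IsCompact L ∧ Convex ℝ L ∧
    (interior (((↑) : H → Euc n) ⁻¹' L)).Nonempty

/-- Sets of special form: `L + s(B ∩ H^⊥)` with `L` a convex body in `H` and `s > 0`. -/
def SpecialForm {n : ℕ} (H : Submodule ℝ (Euc n)) (T : Set (Euc n)) : Prop :=
  ∃ (L : Set (Euc n)) (s : ℝ), IsBodyIn H L ∧ 0 < s ∧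
    T = L + s • (closedBall (0 : Euc n) 1 ∩ ((Hᗮ : Submodule ℝ (Euc n)) : Set (Euc n)))

/-- given two non-parallel lines `ε = p + ℝv` and `ε' = ℝw` in `ℝ²` with `ε'`
through the origin, there are a segment `I ⊆ ε`, an `o`-symmetric segment `I' ⊆ ε'` of the
same length, and an `o`-symmetric convex body `K` with `I ⊆ K` but `I' ⊄ K`. -/
theorem stmt0 (p v w : Euc 2) (hv : v ≠ 0) (hw : w ≠ 0)
    (hpar : ∀ c : ℝ, w ≠ c • v) :
    ∃ a b c : Euc 2,
      segment ℝ a b ⊆ {x | ∃ t : ℝ, x = p + t • v} ∧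
      segment ℝ (-c) c ⊆ {x | ∃ t : ℝ, x = t • w} ∧
      dist a b = dist (-c) c ∧
      ∃ K : Set (Euc 2), IsCompact K ∧ Convex ℝ K ∧ (interior K).Nonempty ∧
        K = -K ∧ segment ℝ a b ⊆ K ∧ ¬ segment ℝ (-c) c ⊆ K := by

  classical
  have hv' : (0:ℝ) < ‖v‖ := norm_pos_iff.mpr hv
  have hw' : (0:ℝ) < ‖w‖ := norm_pos_iff.mpr hw
  -- the component of `w` orthogonal to `v`
  set u : Euc 2 := w - ((inner ℝ w v : ℝ) / ‖v‖ ^ 2) • v with hu_def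
  have huv : (inner ℝ u v : ℝ) = 0 := by
    rw [hu_def, inner_sub_left, real_inner_smul_left, real_inner_self_eq_norm_sq]
    field_simp
    ring
  have hu : u ≠ 0 := by
    intro h
    exact hpar ((inner ℝ w v : ℝ) / ‖v‖ ^ 2) (sub_eq_zero.mp (hu_def ▸ h))
  have hu' : (0:ℝ) < ‖u‖ := norm_pos_iff.mpr hu
  have huw : (inner ℝ u w : ℝ) = ‖u‖ ^ 2 := by
    have hw_eq : w = u + ((inner ℝ w v : ℝ) / ‖v‖ ^ 2) • v := by
      rw [hu_def]; abel
    rw [hw_eq, inner_add_right, real_inner_smul_right, huv, real_inner_self_eq_norm_sq]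
    ring
  set M : ℝ := |(inner ℝ u p : ℝ)| + 1 with hM_def
  have hM1 : (1:ℝ) ≤ M := le_add_of_nonneg_left (abs_nonneg _)
  have hM : (0:ℝ) < M := by linarith
  set s : ℝ := (M + 1) / ‖u‖ ^ 2 with hs_def
  have hs : 0 < s := by positivity
  set t : ℝ := s * ‖w‖ / ‖v‖ with ht_def
  have ht : 0 < t := by positivity
  set c : Euc 2 := s • w with hc_def
  set a : Euc 2 := p + (-t) • v with ha_def
  set b : Euc 2 := p + t • v with hb_def
  set R : ℝ := ‖p‖ + t * ‖v‖ + 1 with hR_def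
  have hR : 0 < R := by positivity
  set K : Set (Euc 2) := {x | |(inner ℝ u x : ℝ)| ≤ M} ∩ closedBall 0 R with hK_def
  refine ⟨a, b, c, ?_, ?_, ?_, K, ?_, ?_, ?_, ?_, ?_, ?_⟩
  · -- segment a b ⊆ ε
    rw [segment_eq_image']
    rintro x ⟨θ, -, rfl⟩
    exact ⟨-t + θ * (2 * t), by rw [ha_def, hb_def]; module⟩
  · -- segment (-c) c ⊆ ε'
    rw [segment_eq_image']
    rintro x ⟨θ, -, rfl⟩
    exact ⟨-s + θ * (2 * s), by rw [hc_def]; module⟩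
  · -- equal lengths
    have h1 : a - b = (-(2 * t)) • v := by rw [ha_def, hb_def]; module
    have h2 : (-c) - c = (-(2 * s)) • w := by rw [hc_def]; module
    rw [dist_eq_norm, dist_eq_norm, h1, h2, norm_smul, norm_smul]
    simp only [norm_neg, Real.norm_eq_abs, abs_neg, abs_mul]
    rw [abs_of_pos ht, abs_of_pos hs, abs_of_nonneg (by norm_num : (0:ℝ) ≤ 2)]
    rw [ht_def]
    field_simp
  · -- compact
    refine (isCompact_closedBall 0 R).inter_left ?_
    have : {x : Euc 2 | |(inner ℝ u x : ℝ)| ≤ M}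
        = (fun x : Euc 2 => |(inner ℝ u x : ℝ)|) ⁻¹' Iic M := rfl
    rw [this]
    exact IsClosed.preimage ((continuous_const.inner continuous_id).abs) isClosed_Iic
  · -- convex
    refine Convex.inter ?_ (convex_closedBall 0 R)
    intro x hx y hy α β hα hβ hαβ
    simp only [Set.mem_setOf_eq] at hx hy ⊢
    rw [inner_add_right, real_inner_smul_right, real_inner_smul_right]
    calc |α * (inner ℝ u x : ℝ) + β * (inner ℝ u y : ℝ)|
        ≤ |α * (inner ℝ u x : ℝ)| + |β * (inner ℝ u y : ℝ)| := abs_add_le _ _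
      _ ≤ α * M + β * M := by
          rw [abs_mul, abs_mul, abs_of_nonneg hα, abs_of_nonneg hβ]
          gcongr
      _ = M := by rw [← add_mul, hαβ, one_mul]
  · -- nonempty interior
    set δ : ℝ := min R (M / ‖u‖) with hδ_def
    have hδ : 0 < δ := lt_min hR (by positivity)
    have hball : ball (0 : Euc 2) δ ⊆ K := by
      intro x hx
      rw [mem_ball_zero_iff] at hx
      constructor
      · have h1 : |(inner ℝ u x : ℝ)| ≤ ‖u‖ * ‖x‖ := abs_real_inner_le_norm u x
        have h2 : ‖x‖ < M / ‖u‖ := lt_of_lt_of_le hx (min_le_right _ _)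
        have : ‖u‖ * ‖x‖ < ‖u‖ * (M / ‖u‖) := by gcongr
        rw [mul_div_cancel₀ _ (ne_of_gt hu')] at this
        exact le_of_lt (lt_of_le_of_lt h1 this)
      · rw [mem_closedBall_zero_iff]
        exact le_of_lt (lt_of_lt_of_le hx (min_le_left _ _))
    exact ⟨0, (isOpen_ball.subset_interior_iff.mpr hball) (mem_ball_self hδ)⟩
  · -- symmetric
    ext x
    rw [Set.mem_neg]
    simp only [hK_def, Set.mem_inter_iff, Set.mem_setOf_eq, mem_closedBall_zero_iff,
      inner_neg_right, abs_neg, norm_neg]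
  · -- segment ⊆ K
    have haK : a ∈ K := by
      constructor
      · show |(inner ℝ u a : ℝ)| ≤ M
        rw [ha_def, inner_add_right, real_inner_smul_right, huv, mul_zero, add_zero]
        rw [hM_def]; linarith
      · rw [mem_closedBall_zero_iff, ha_def]
        calc ‖p + (-t) • v‖ ≤ ‖p‖ + ‖(-t) • v‖ := norm_add_le _ _
          _ = ‖p‖ + t * ‖v‖ := by
              rw [norm_smul, Real.norm_eq_abs, abs_neg, abs_of_pos ht]
          _ ≤ R := by rw [hR_def]; linarith
    have hbK : b ∈ K := by
      constructor
      · show |(inner ℝ u b : ℝ)| ≤ M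
        rw [hb_def, inner_add_right, real_inner_smul_right, huv, mul_zero, add_zero]
        rw [hM_def]; linarith
      · rw [mem_closedBall_zero_iff, hb_def]
        calc ‖p + t • v‖ ≤ ‖p‖ + ‖t • v‖ := norm_add_le _ _
          _ = ‖p‖ + t * ‖v‖ := by rw [norm_smul, Real.norm_eq_abs, abs_of_pos ht]
          _ ≤ R := by rw [hR_def]; linarith
    have hconv : Convex ℝ K := by
      refine Convex.inter ?_ (convex_closedBall 0 R)
      intro x hx y hy α β hα hβ hαβ
      simp only [Set.mem_setOf_eq] at hx hy ⊢
      rw [inner_add_right, real_inner_smul_right, real_inner_smul_right]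
      calc |α * (inner ℝ u x : ℝ) + β * (inner ℝ u y : ℝ)|
          ≤ |α * (inner ℝ u x : ℝ)| + |β * (inner ℝ u y : ℝ)| := abs_add_le _ _
        _ ≤ α * M + β * M := by
            rw [abs_mul, abs_mul, abs_of_nonneg hα, abs_of_nonneg hβ]
            gcongr
        _ = M := by rw [← add_mul, hαβ, one_mul]
    exact hconv.segment_subset haK hbK
  · -- c ∉ K
    intro hsub
    have hcK : c ∈ K := hsub (right_mem_segment ℝ (-c) c)
    have h1 : |(inner ℝ u c : ℝ)| ≤ M := hcK.1
    have h2 : (inner ℝ u c : ℝ) = M + 1 := by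
      rw [hc_def, real_inner_smul_right, huw, hs_def]
      field_simp
    rw [h2, abs_of_pos (by linarith : (0:ℝ) < M + 1)] at h1
    linarith
end
end

section
/- Let H be a proper linear subspace of ℝⁿ and ◇ : 𝒦ⁿₙ → 𝒦ⁿ_H a monotonic map from convex bodies of ℝⁿ to H-symmetric compact convex sets, which is invariant on H-symmetric spherical cylinders. Then T ⊆ ◇T for every set T of special form, i.e., every set T = L + s(B ∩ H^⊥) where L is a convex body in H and s > 0. -/
open Set MeasureTheory Metric Pointwise

noncomputable section

lemma mem_scaled_ball_inter {n : ℕ} (W : Submodule ℝ (Euc n)) {r : ℝ} (hr : 0 < r)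
    {a : Euc n} (ha : a ∈ W) (hna : ‖a‖ ≤ r) :
    a ∈ r • (closedBall (0 : Euc n) 1 ∩ (W : Set (Euc n))) := by
  refine Set.mem_smul_set.2 ⟨r⁻¹ • a, ⟨?_, W.smul_mem _ ha⟩, ?_⟩
  · rw [mem_closedBall_zero_iff, norm_smul, norm_inv, Real.norm_eq_abs, abs_of_pos hr]
    rw [inv_mul_le_iff₀ hr, mul_one]; exact hna
  · rw [smul_smul, mul_inv_cancel₀ hr.ne', one_smul]

lemma cyl_ball_subset {n : ℕ} (H : Submodule ℝ (Euc n)) {r s : ℝ} (hr : 0 < r) (hs : 0 < s)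
    (c : Euc n) : closedBall c (min r s) ⊆ cylSet H r s c := by
  intro y hy
  set w := y - c with hw
  have hwn : ‖w‖ ≤ min r s := by
    rw [hw, ← dist_eq_norm]; exact mem_closedBall.1 hy
  set wH : Euc n := (H.orthogonalProjection w : Euc n) with hwH
  set wP : Euc n := w - wH with hwP
  have hP : wP ∈ Hᗮ := Submodule.sub_starProjection_mem_orthogonal (K := H) w
  have hHmem : wH ∈ H := (H.orthogonalProjection w).2
  have hperp : (inner ℝ wH wP : ℝ) = 0 := (Submodule.mem_orthogonal H wP).1 hP wH hHmem
  have hsum : wH + wP = w := by rw [hwP]; abel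
  have hpyth : ‖w‖ ^ 2 = ‖wH‖ ^ 2 + ‖wP‖ ^ 2 := by
    rw [← hsum]
    simpa [sq] using norm_add_sq_eq_norm_sq_add_norm_sq_of_inner_eq_zero wH wP hperp
  have hwHn : ‖wH‖ ≤ ‖w‖ := by nlinarith [norm_nonneg wH, norm_nonneg wP, norm_nonneg w]
  have hwPn : ‖wP‖ ≤ ‖w‖ := by nlinarith [norm_nonneg wH, norm_nonneg wP, norm_nonneg w]
  refine ⟨w, ?_, by simp [hw]⟩
  have m1 : wH ∈ r • (closedBall (0 : Euc n) 1 ∩ (H : Set (Euc n))) :=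
    mem_scaled_ball_inter H hr hHmem (hwHn.trans (hwn.trans (min_le_left r s)))
  have m2 : wP ∈ s • (closedBall (0 : Euc n) 1 ∩ ((Hᗮ : Submodule ℝ (Euc n)) : Set (Euc n))) :=
    mem_scaled_ball_inter Hᗮ hs hP (hwPn.trans (hwn.trans (min_le_right r s)))
  exact hsum ▸ Set.add_mem_add m1 m2

/-- if `◇ : 𝒦ⁿₙ → 𝒦ⁿ_H` is monotonic and invariant on `H`-symmetric spherical
cylinders (`H` a proper subspace), then `T ⊆ ◇T` for every set `T` of special form. -/
theorem stmt6 {n : ℕ} (H : Submodule ℝ (Euc n)) (hH : H ≠ ⊤)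
    (dia : FullBody n → ConvexBody (Euc n))
    (hcod : ∀ K, SymmWrt H (dia K : Set (Euc n)))
    (hmono : ∀ K L : FullBody n,
      (K.1 : Set (Euc n)) ⊆ (L.1 : Set (Euc n)) → (dia K : Set (Euc n)) ⊆ (dia L : Set (Euc n)))
    (hcyl : ∀ (C : FullBody n) (r s : ℝ) (x : Euc n), 0 < r → 0 < s → x ∈ H →
      (C.1 : Set (Euc n)) = cylSet H r s x → (dia C : Set (Euc n)) = (C.1 : Set (Euc n))) :
    ∀ T : FullBody n, SpecialForm H (T.1 : Set (Euc n)) →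
      (T.1 : Set (Euc n)) ⊆ (dia T : Set (Euc n)) := by
  rintro T ⟨L, s, ⟨hLH, hLc, hLconv, p0, hp0⟩, hs, hT⟩ x hx
  obtain ⟨ε, hε, hball⟩ := Metric.isOpen_iff.1 isOpen_interior p0 hp0
  have hballL : ∀ q : H, dist q p0 < ε → (q : Euc n) ∈ L := fun q hq =>
    Set.mem_preimage.1 (interior_subset (hball hq))
  rw [hT] at hx
  rcases Set.mem_add.1 hx with ⟨ℓ, hℓ, v, hv, hsum⟩
  have key : ∀ t : ℝ, 0 < t → t ≤ 1 →
      ((1 - t) • ℓ + t • (p0 : Euc n)) + v ∈ (dia T : Set (Euc n)) := by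
    intro t ht ht1
    set c : Euc n := (1 - t) • ℓ + t • (p0 : Euc n) with hc
    set r : ℝ := t * ε / 2 with hrdef
    have hr : 0 < r := by positivity
    have claimA : ∀ a : Euc n, a ∈ H → ‖a‖ ≤ r → c + a ∈ L := by
      intro a haH hna
      set q : H := p0 + ⟨t⁻¹ • a, H.smul_mem _ haH⟩ with hq
      have hqball : dist q p0 < ε := by
        have h1 : dist q p0 = ‖t⁻¹ • a‖ := by
          rw [dist_eq_norm, hq]
          simp [Submodule.coe_norm]
        rw [h1, norm_smul, norm_inv, Real.norm_eq_abs, abs_of_pos ht]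
        calc t⁻¹ * ‖a‖ ≤ t⁻¹ * r :=
              mul_le_mul_of_nonneg_left hna (inv_nonneg.2 ht.le)
          _ = ε / 2 := by
              rw [hrdef, show t * ε / 2 = t * (ε / 2) by ring, ← mul_assoc,
                inv_mul_cancel₀ ht.ne', one_mul]
          _ < ε := by linarith
      have hqL : (q : Euc n) ∈ L := hballL q hqball
      have hcomb : (1 - t) • ℓ + t • (q : Euc n) ∈ L :=
        hLconv hℓ hqL (by linarith) ht.le (by ring)
      have heq : (1 - t) • ℓ + t • (q : Euc n) = c + a := by
        rw [hq, hc]; push_cast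
        rw [smul_add, smul_smul, mul_inv_cancel₀ ht.ne', one_smul]; abel
      rwa [heq] at hcomb
    set base : Set (Euc n) := r • (closedBall (0 : Euc n) 1 ∩ (H : Set (Euc n)))
      + s • (closedBall (0 : Euc n) 1 ∩ ((Hᗮ : Submodule ℝ (Euc n)) : Set (Euc n))) with hbase
    set S : Set (Euc n) := cylSet H r s c with hS
    have hSim : S = (fun y => c + y) '' base := rfl
    have hconv : Convex ℝ S := by
      rw [hSim]
      exact Convex.translate ((((convex_closedBall _ _).inter H.convex).smul r).add
        (((convex_closedBall _ _).inter Hᗮ.convex).smul s)) c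
    have hcompbase : IsCompact base := by
      have k1 : IsCompact (r • (closedBall (0 : Euc n) 1 ∩ (H : Set (Euc n)))) := by
        rw [← Set.image_smul]
        exact (((isCompact_closedBall _ _).inter_right
          (Submodule.closed_of_finiteDimensional H))).image (continuous_const_smul r)
      have k2 : IsCompact (s • (closedBall (0 : Euc n) 1
          ∩ ((Hᗮ : Submodule ℝ (Euc n)) : Set (Euc n)))) := by
        rw [← Set.image_smul]
        exact (((isCompact_closedBall _ _).inter_right
          (Submodule.closed_of_finiteDimensional Hᗮ))).image (continuous_const_smul s)
      exact k1.add k2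
    have hcomp : IsCompact S := by
      rw [hSim]; exact hcompbase.image (continuous_add_left c)
    have m0 : (0 : Euc n) ∈ r • (closedBall (0 : Euc n) 1 ∩ (H : Set (Euc n))) :=
      mem_scaled_ball_inter H hr H.zero_mem (by simp [hr.le])
    have m0' : (0 : Euc n) ∈ s • (closedBall (0 : Euc n) 1
        ∩ ((Hᗮ : Submodule ℝ (Euc n)) : Set (Euc n))) :=
      mem_scaled_ball_inter Hᗮ hs Hᗮ.zero_mem (by simp [hs.le])
    have h0base : (0 : Euc n) ∈ base := by
      simpa using Set.add_mem_add m0 m0'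
    have hcS : c ∈ S := ⟨0, h0base, by simp⟩
    have hne : S.Nonempty := ⟨c, hcS⟩
    have hint : (interior S).Nonempty := by
      refine ⟨c, mem_interior_iff_mem_nhds.2 (Filter.mem_of_superset
        (closedBall_mem_nhds c (lt_min hr hs)) ?_)⟩
      rw [hS]; exact cyl_ball_subset H hr hs c
    set C : FullBody n := ⟨⟨S, hconv, hcomp, hne⟩, hint⟩ with hC
    have hsub : (C.1 : Set (Euc n)) ⊆ (T.1 : Set (Euc n)) := by
      rintro y ⟨z, hz, rfl⟩
      rcases Set.mem_add.1 hz with ⟨a, haM, b, hbM, hab⟩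
      rcases Set.mem_smul_set.1 haM with ⟨a', ⟨ha'B, ha'H⟩, rfl⟩
      have haH : r • a' ∈ H := H.smul_mem _ ha'H
      have hna : ‖r • a'‖ ≤ r := by
        rw [norm_smul, Real.norm_eq_abs, abs_of_pos hr]
        nlinarith [mem_closedBall_zero_iff.1 ha'B, norm_nonneg a']
      rw [hT]
      exact Set.mem_add.2 ⟨c + r • a', claimA _ haH hna, b, hbM, by rw [← hab]; abel⟩
    have hcH : c ∈ H := H.add_mem (H.smul_mem _ (hLH hℓ)) (H.smul_mem _ p0.2)
    have hdia : (dia C : Set (Euc n)) = (C.1 : Set (Euc n)) := hcyl C r s c hr hs hcH rfl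
    have hmem : c + v ∈ S := ⟨0 + v, Set.add_mem_add m0 hv, by simp⟩
    exact hmono C T hsub (by rw [hdia]; exact hmem)
  have hclosed : IsClosed (dia T : Set (Euc n)) := (dia T).isCompact.isClosed
  rw [← hclosed.closure_eq, Metric.mem_closure_iff]
  intro δ hδ
  set M : ℝ := ‖ℓ - (p0 : Euc n)‖ + 1 with hM
  have hM0 : 0 < M := by positivity
  set t : ℝ := min 1 (δ / M) with htdef
  have ht : 0 < t := lt_min one_pos (by positivity)
  have ht1 : t ≤ 1 := min_le_left _ _
  refine ⟨((1 - t) • ℓ + t • (p0 : Euc n)) + v, key t ht ht1, ?_⟩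
  have hxeq : x = ℓ + v := hsum.symm
  rw [hxeq, dist_eq_norm]
  have hdiff : (ℓ + v) - (((1 - t) • ℓ + t • (p0 : Euc n)) + v) = t • (ℓ - (p0 : Euc n)) := by
    rw [sub_smul, one_smul, smul_sub]; abel
  rw [hdiff, norm_smul, Real.norm_eq_abs, abs_of_pos ht]
  have h1 : t ≤ δ / M := min_le_right _ _
  have h2 : ‖ℓ - (p0 : Euc n)‖ < M := by rw [hM]; linarith
  calc t * ‖ℓ - (p0 : Euc n)‖ < t * M := by exact mul_lt_mul_of_pos_left h2 ht
    _ ≤ (δ / M) * M := mul_le_mul_of_nonneg_right h1 hM0.le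
    _ = δ := div_mul_cancel₀ _ hM0.ne'
end
end

section
/- Let H be a proper linear subspace of ℝⁿ and ◇ : 𝒦ⁿₙ → 𝒦ⁿ_H a monotonic map. If ◇T ⊆ T for every set T of special form (T = L + s(B ∩ H^⊥), L a convex body in H, s > 0) and (◇K)|H ⊇ K|H for all convex bodies K, then ◇ is projection invariant, i.e., (◇K)|H = K|H for all convex bodies K. -/
open Set MeasureTheory Metric Pointwise

noncomputable section

namespace Stmt7Aux

variable {n : ℕ} (H : Submodule ℝ (Euc n))

lemma projS_eq_clm :
    projS H = (H.subtypeL.comp (H.orthogonalProjection) : Euc n →L[ℝ] Euc n) := rfl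

lemma projS_mem (x : Euc n) : projS H x ∈ H := (H.orthogonalProjection x).2

lemma projS_eq_self {x : Euc n} (hx : x ∈ H) : projS H x = x :=
  Submodule.starProjection_eq_self_iff.2 hx

lemma projS_eq_zero {x : Euc n} (hx : x ∈ Hᗮ) : projS H x = 0 := by
  simp [projS, Submodule.orthogonalProjection, Submodule.orthogonalProjectionOnto_apply_of_mem_orthogonal hx]

lemma projS_add (x y : Euc n) : projS H (x + y) = projS H x + projS H y := by
  rw [projS_eq_clm]; exact map_add _ x y

lemma norm_projS_le (x : Euc n) : ‖projS H x‖ ≤ ‖x‖ := by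
  rw [projS_eq_clm]
  calc ‖(H.subtypeL.comp (H.orthogonalProjection)) x‖
      = ‖H.orthogonalProjection x‖ := rfl
    _ ≤ ‖H.orthogonalProjection‖ * ‖x‖ := (H.orthogonalProjection).le_opNorm x
    _ ≤ 1 * ‖x‖ := by
        exact mul_le_mul_of_nonneg_right (Submodule.orthogonalProjection_norm_le H) (norm_nonneg x)
    _ = ‖x‖ := one_mul ‖x‖

/-- The projection of a full body onto `H` is a body in `H`. -/
lemma isBodyIn_pimg (K : FullBody n) : IsBodyIn H (pimg H (K.1 : Set (Euc n))) := by
  obtain ⟨x0, hx0⟩ := K.2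
  obtain ⟨ε, hε, hball⟩ := Metric.mem_nhds_iff.1 (mem_interior_iff_mem_nhds.1 hx0)
  refine ⟨?_, ?_, ?_, ?_⟩
  · rintro _ ⟨x, -, rfl⟩; exact projS_mem H x
  · exact (K.1.isCompact.image (by rw [projS_eq_clm]; exact
      (H.subtypeL.comp (H.orthogonalProjection)).continuous))
  · unfold pimg
    rw [projS_eq_clm]
    exact K.1.convex.linear_image (H.subtypeL.comp (H.orthogonalProjection) : _).toLinearMap
  · refine ⟨⟨projS H x0, projS_mem H x0⟩, ?_⟩
    rw [mem_interior]
    refine ⟨Metric.ball ⟨projS H x0, projS_mem H x0⟩ ε, ?_, Metric.isOpen_ball,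
      Metric.mem_ball_self hε⟩
    rintro ⟨h, hh⟩ hmem
    have hd : ‖h - projS H x0‖ < ε := by
      simpa [Metric.mem_ball, Subtype.dist_eq, dist_eq_norm] using hmem
    have hy : x0 + (h - projS H x0) ∈ (K.1 : Set (Euc n)) := by
      apply hball
      simp [Metric.mem_ball, dist_eq_norm, hd]
    refine ⟨x0 + (h - projS H x0), hy, ?_⟩
    rw [projS_add, projS_eq_self H (Submodule.sub_mem H hh (projS_mem H x0))]
    abel

end Stmt7Aux

open Stmt7Aux in
/-- if `◇ : 𝒦ⁿₙ → 𝒦ⁿ_H` is monotonic, `◇T ⊆ T` for every set `T` of special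
form, and `(◇K)|H ⊇ K|H` for every convex body `K`, then `◇` is projection invariant. -/
theorem stmt7 {n : ℕ} (H : Submodule ℝ (Euc n)) (hH : H ≠ ⊤)
    (dia : FullBody n → ConvexBody (Euc n))
    (hcod : ∀ K, SymmWrt H (dia K : Set (Euc n)))
    (hmono : ∀ K L : FullBody n,
      (K.1 : Set (Euc n)) ⊆ (L.1 : Set (Euc n)) → (dia K : Set (Euc n)) ⊆ (dia L : Set (Euc n)))
    (hspec : ∀ T : FullBody n, SpecialForm H (T.1 : Set (Euc n)) →
      (dia T : Set (Euc n)) ⊆ (T.1 : Set (Euc n)))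
    (hproj : ∀ K : FullBody n, pimg H (K.1 : Set (Euc n)) ⊆ pimg H (dia K : Set (Euc n))) :
    ∀ K : FullBody n, pimg H (dia K : Set (Euc n)) = pimg H (K.1 : Set (Euc n)) := by
  intro K
  refine Subset.antisymm ?_ (hproj K)
  -- set up
  set L : Set (Euc n) := pimg H (K.1 : Set (Euc n)) with hL
  obtain ⟨R, hR⟩ := K.1.isCompact.isBounded.subset_closedBall 0
  set s : ℝ := 2 * |R| + 1 with hs
  have hspos : 0 < s := by positivity
  set C : Set (Euc n) := s • (closedBall (0 : Euc n) 1 ∩ ((Hᗮ : Submodule ℝ (Euc n)) : Set (Euc n))) with hC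
  set Tset : Set (Euc n) := L + C with hT
  -- K ⊆ Tset
  have hKT : (K.1 : Set (Euc n)) ⊆ Tset := by
    intro x hx
    have hnx : ‖x‖ ≤ |R| := le_trans (by simpa using hR hx) (le_abs_self R)
    refine ⟨projS H x, ⟨x, hx, rfl⟩, x - projS H x, ?_, by module⟩
    refine ⟨s⁻¹ • (x - projS H x), ⟨?_, ?_⟩, ?_⟩
    rotate_left 2
    · show s • (s⁻¹ • (x - projS H x)) = x - projS H x
      rw [smul_smul, mul_inv_cancel₀ hspos.ne', one_smul]
    · rw [mem_closedBall, dist_zero_right, norm_smul]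
      have h1 : ‖x - projS H x‖ ≤ 2 * |R| := by
        calc ‖x - projS H x‖ ≤ ‖x‖ + ‖projS H x‖ := norm_sub_le _ _
          _ ≤ |R| + |R| := add_le_add hnx ((norm_projS_le H x).trans hnx)
          _ = 2 * |R| := by ring
      rw [norm_inv, Real.norm_eq_abs, abs_of_pos hspos]
      calc s⁻¹ * ‖x - projS H x‖ ≤ s⁻¹ * s := by
            apply mul_le_mul_of_nonneg_left _ (by positivity)
            exact h1.trans (by simp [hs])
        _ = 1 := inv_mul_cancel₀ hspos.ne'
    · exact Submodule.smul_mem _ _ (Submodule.sub_starProjection_mem_orthogonal x)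
  have hKne : (K.1 : Set (Euc n)).Nonempty := K.1.nonempty
  -- Tset is a full body
  have hLbody := isBodyIn_pimg H K
  have hTcompact : IsCompact Tset := by
    refine hLbody.2.1.add ?_
    exact ((isCompact_closedBall _ _).inter_right (H.orthogonal.closed_of_finiteDimensional)).smul s
  have hTconvex : Convex ℝ Tset := by
    refine hLbody.2.2.1.add ?_
    exact ((convex_closedBall _ _).inter (Hᗮ : Submodule ℝ (Euc n)).convex).smul s
  have hTint : (interior Tset).Nonempty := K.2.mono (interior_mono hKT)
  set T : FullBody n := ⟨⟨Tset, hTconvex, hTcompact, hKne.mono hKT⟩, hTint⟩ with hTdef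
  have hTspec : SpecialForm H (T.1 : Set (Euc n)) := ⟨L, s, hLbody, hspos, rfl⟩
  -- conclude
  have hsub : (dia K : Set (Euc n)) ⊆ Tset := (hmono K T hKT).trans (hspec T hTspec)
  intro y hy
  obtain ⟨x, hx, rfl⟩ := hy
  obtain ⟨l, hl, c, hc, rfl⟩ := hsub hx
  obtain ⟨v, ⟨-, hv⟩, rfl⟩ := hc
  have : projS H (l + s • v) = l := by
    rw [projS_add, projS_eq_self H (hLbody.1 hl)]
    have : projS H (s • v) = 0 := by
      apply projS_eq_zero H (Submodule.smul_mem _ _ hv)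
    rw [this, add_zero]
  rw [this]; exact hl
end
end

section
/- Let H ∈ G_{n,i} for some i ∈ {1,…,n−1} and ◇ : 𝒦ⁿₙ → 𝒦ⁿ_H be a strictly monotonic, idempotent map which is invariant on H-symmetric spherical cylinders. Then ◇ is projection invariant: (◇K)|H = K|H for all convex bodies K. -/
open Set MeasureTheory Metric Pointwise

noncomputable section

open RealInnerProductSpace

namespace Stmt8Proof

variable {n : ℕ}

lemma projS_mem (H : Submodule ℝ (Euc n)) (z : Euc n) : projS H z ∈ H :=
  (H.orthogonalProjection z).2

lemma sub_projS_mem (H : Submodule ℝ (Euc n)) (z : Euc n) : z - projS H z ∈ Hᗮ :=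
  H.sub_starProjection_mem_orthogonal z

lemma inner_eq_zero_of_mem (H : Submodule ℝ (Euc n)) {u v : Euc n} (hu : u ∈ H) (hv : v ∈ Hᗮ) :
    ⟪u, v⟫ = 0 :=
  Submodule.inner_right_of_mem_orthogonal hu hv

lemma inner_projS_right (H : Submodule ℝ (Euc n)) {u : Euc n} (hu : u ∈ H) (z : Euc n) :
    ⟪u, projS H z⟫ = ⟪u, z⟫ := by
  have h := inner_eq_zero_of_mem H hu (sub_projS_mem H z)
  rw [inner_sub_right] at h
  linarith

lemma norm_sq_decomp (H : Submodule ℝ (Euc n)) (z : Euc n) :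
    ‖projS H z‖ ^ 2 + ‖z - projS H z‖ ^ 2 = ‖z‖ ^ 2 := by
  have h0 : ⟪projS H z, z - projS H z⟫ = 0 :=
    inner_eq_zero_of_mem H (projS_mem H z) (sub_projS_mem H z)
  have h1 := norm_add_sq_real (projS H z) (z - projS H z)
  rw [h0] at h1
  have h2 : projS H z + (z - projS H z) = z := by abel
  rw [h2] at h1
  linarith

lemma norm_projS_le (H : Submodule ℝ (Euc n)) (z : Euc n) : ‖projS H z‖ ≤ ‖z‖ := by
  have h1 : ‖projS H z‖ ^ 2 ≤ ‖z‖ ^ 2 := by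
    nlinarith [norm_sq_decomp H z, sq_nonneg ‖z - projS H z‖]
  have h2 := Real.sqrt_le_sqrt h1
  rwa [Real.sqrt_sq (norm_nonneg _), Real.sqrt_sq (norm_nonneg _)] at h2

lemma norm_sub_projS_le (H : Submodule ℝ (Euc n)) (z : Euc n) : ‖z - projS H z‖ ≤ ‖z‖ := by
  have h1 : ‖z - projS H z‖ ^ 2 ≤ ‖z‖ ^ 2 := by
    nlinarith [norm_sq_decomp H z, sq_nonneg ‖projS H z‖]
  have h2 := Real.sqrt_le_sqrt h1
  rwa [Real.sqrt_sq (norm_nonneg _), Real.sqrt_sq (norm_nonneg _)] at h2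

lemma mem_cylSet (H : Submodule ℝ (Euc n)) {r s : ℝ} (hr : 0 < r) (hs : 0 < s)
    (x : Euc n) {p v : Euc n} (hpH : p ∈ H) (hpr : ‖p‖ ≤ r) (hvH : v ∈ Hᗮ) (hvs : ‖v‖ ≤ s) :
    x + p + v ∈ cylSet H r s x := by
  refine ⟨p + v, Set.add_mem_add ?_ ?_, by abel⟩
  · refine Set.mem_smul_set.2 ⟨r⁻¹ • p, ⟨?_, H.smul_mem _ hpH⟩, ?_⟩
    · rw [mem_closedBall_zero_iff, norm_smul, Real.norm_eq_abs, abs_of_pos (inv_pos.2 hr)]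
      have := div_le_one_of_le₀ hpr hr.le
      rwa [div_eq_inv_mul] at this
    · rw [smul_smul, mul_inv_cancel₀ hr.ne', one_smul]
  · refine Set.mem_smul_set.2 ⟨s⁻¹ • v, ⟨?_, Hᗮ.smul_mem _ hvH⟩, ?_⟩
    · rw [mem_closedBall_zero_iff, norm_smul, Real.norm_eq_abs, abs_of_pos (inv_pos.2 hs)]
      have := div_le_one_of_le₀ hvs hs.le
      rwa [div_eq_inv_mul] at this
    · rw [smul_smul, mul_inv_cancel₀ hs.ne', one_smul]

lemma cylSet_mem_elim (H : Submodule ℝ (Euc n)) {r s : ℝ} (hr : 0 < r) (hs : 0 < s)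
    {x y : Euc n} (hy : y ∈ cylSet H r s x) :
    ∃ p v : Euc n, p ∈ H ∧ ‖p‖ ≤ r ∧ v ∈ Hᗮ ∧ ‖v‖ ≤ s ∧ y = x + p + v := by
  obtain ⟨z, hz, rfl⟩ := hy
  obtain ⟨a, ha, b, hb, rfl⟩ := Set.mem_add.1 hz
  obtain ⟨a₀, ⟨ha₀B, ha₀H⟩, rfl⟩ := Set.mem_smul_set.1 ha
  obtain ⟨b₀, ⟨hb₀B, hb₀H⟩, rfl⟩ := Set.mem_smul_set.1 hb
  refine ⟨r • a₀, s • b₀, H.smul_mem _ ha₀H, ?_, Hᗮ.smul_mem _ hb₀H, ?_, by abel⟩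
  · rw [norm_smul, Real.norm_eq_abs, abs_of_pos hr]
    exact mul_le_of_le_one_right hr.le (mem_closedBall_zero_iff.1 ha₀B)
  · rw [norm_smul, Real.norm_eq_abs, abs_of_pos hs]
    exact mul_le_of_le_one_right hs.le (mem_closedBall_zero_iff.1 hb₀B)

lemma cylSet_isCompact (H : Submodule ℝ (Euc n)) (r s : ℝ) (x : Euc n) :
    IsCompact (cylSet H r s x) := by
  have hH : IsClosed ((H : Set (Euc n))) := H.closed_of_finiteDimensional
  have hH' : IsClosed ((Hᗮ : Submodule ℝ (Euc n)) : Set (Euc n)) :=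
    Submodule.closed_of_finiteDimensional _
  have h1 : IsCompact (closedBall (0 : Euc n) 1 ∩ (H : Set (Euc n))) :=
    (isCompact_closedBall _ _).inter_right hH
  have h2 : IsCompact (closedBall (0 : Euc n) 1 ∩ ((Hᗮ : Submodule ℝ (Euc n)) : Set (Euc n))) :=
    (isCompact_closedBall _ _).inter_right hH'
  exact ((h1.smul r).add (h2.smul s)).image (continuous_add_left x)

lemma cylSet_convex (H : Submodule ℝ (Euc n)) (r s : ℝ) (x : Euc n) :
    Convex ℝ (cylSet H r s x) :=
  ((((convex_closedBall _ _).inter H.convex).smul r).add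
    (((convex_closedBall _ _).inter (Hᗮ).convex).smul s)).translate x

lemma cylSet_interior (H : Submodule ℝ (Euc n)) {r s : ℝ} (hr : 0 < r) (hs : 0 < s) (x : Euc n) :
    x ∈ interior (cylSet H r s x) := by
  have hball : Metric.ball x (min r s) ⊆ cylSet H r s x := by
    intro y hy
    have hd : ‖y - x‖ < min r s := by rwa [mem_ball, dist_eq_norm] at hy
    have h1 : ‖projS H (y - x)‖ ≤ r :=
      le_trans (norm_projS_le H (y - x)) (le_trans hd.le (min_le_left _ _))
    have h2 : ‖(y - x) - projS H (y - x)‖ ≤ s :=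
      le_trans (norm_sub_projS_le H (y - x)) (le_trans hd.le (min_le_right _ _))
    have hmem := mem_cylSet H hr hs x (projS_mem H (y - x)) h1 (sub_projS_mem H (y - x)) h2
    rwa [show x + projS H (y - x) + ((y - x) - projS H (y - x)) = y from by abel] at hmem
  exact interior_maximal hball isOpen_ball (mem_ball_self (lt_min hr hs))

section Main

variable {H : Submodule ℝ (Euc n)} {dia : FullBody n → ConvexBody (Euc n)}

lemma key_upper
    (hmono : ∀ K L : FullBody n, (K.1 : Set (Euc n)) ⊂ (L.1 : Set (Euc n)) →
      (dia K : Set (Euc n)) ⊂ (dia L : Set (Euc n)))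
    (hcyl : ∀ (C : FullBody n) (r s : ℝ) (x : Euc n), 0 < r → 0 < s → x ∈ H →
      (C.1 : Set (Euc n)) = cylSet H r s x → (dia C : Set (Euc n)) = (C.1 : Set (Euc n)))
    (X : FullBody n) {u : Euc n} (hu : u ∈ H) (hu1 : ‖u‖ = 1)
    {c : ℝ} (hc : ∀ z ∈ (X.1 : Set (Euc n)), ⟪u, z⟫ ≤ c)
    {y : Euc n} (hy : y ∈ (dia X : Set (Euc n))) : ⟪u, y⟫ ≤ c := by
  by_contra hcon
  push_neg at hcon
  set δ : ℝ := (⟪u, y⟫ - c) / 2 with hδdef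
  have hδ : 0 < δ := by
    have : 0 < ⟪u, y⟫ - c := sub_pos.2 hcon
    rw [hδdef]; linarith
  suffices hgoal : ⟪u, y⟫ ≤ c + δ by
    rw [hδdef] at hgoal; linarith
  obtain ⟨R, hR⟩ := X.1.isCompact.isBounded.exists_norm_le
  set R₀ : ℝ := max R 0 + 1 with hR₀def
  have hR₀pos : 0 < R₀ := by
    have : (0 : ℝ) ≤ max R 0 := le_max_right R 0
    rw [hR₀def]; linarith
  have hXR : ∀ z ∈ (X.1 : Set (Euc n)), ‖z‖ < R₀ := by
    intro z hz
    have h1 : ‖z‖ ≤ max R 0 := le_trans (hR z hz) (le_max_left R 0)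
    rw [hR₀def]; linarith
  set ρ : ℝ := R₀ ^ 2 / (2 * δ) + |c| + 1 + R₀ with hρdef
  have hρpos : 0 < ρ := by rw [hρdef]; positivity
  have hρδ : R₀ ^ 2 ≤ 2 * ρ * δ := by
    have h1 : R₀ ^ 2 / (2 * δ) * (2 * δ) = R₀ ^ 2 := div_mul_cancel₀ _ (by positivity)
    have h2 : (0 : ℝ) ≤ |c| := abs_nonneg c
    rw [hρdef]; nlinarith [hR₀pos, hδ]
  set r : ℝ := ρ + c + δ with hrdef
  have hrR₀ : R₀ < r := by
    have h1 : -|c| ≤ c := neg_abs_le c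
    have h2 : (0 : ℝ) ≤ R₀ ^ 2 / (2 * δ) := by positivity
    rw [hrdef, hρdef]; linarith
  have hrpos : 0 < r := lt_trans hR₀pos hrR₀
  set x : Euc n := (-ρ) • u with hxdef
  have hxH : x ∈ H := H.smul_mem _ hu
  have hcpt := cylSet_isCompact H r R₀ x
  have hconv := cylSet_convex H r R₀ x
  have hintx : x ∈ interior (cylSet H r R₀ x) := cylSet_interior H hrpos hR₀pos x
  have hint : (interior (cylSet H r R₀ x)).Nonempty := ⟨x, hintx⟩
  have hne : (cylSet H r R₀ x).Nonempty := ⟨x, interior_subset hintx⟩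
  set CF : FullBody n := ⟨⟨cylSet H r R₀ x, hconv, hcpt, hne⟩, hint⟩ with hCFdef
  have hdiaC : (dia CF : Set (Euc n)) = cylSet H r R₀ x := hcyl CF r R₀ x hrpos hR₀pos hxH rfl
  have hsub : (X.1 : Set (Euc n)) ⊆ cylSet H r R₀ x := by
    intro z hz
    have hpH := projS_mem H z
    have hpr : ‖projS H z - x‖ ≤ r := by
      have e1 : projS H z - x = projS H z + ρ • u := by rw [hxdef]; module
      have e2 : ‖projS H z + ρ • u‖ ^ 2
          = ‖projS H z‖ ^ 2 + 2 * (ρ * ⟪u, projS H z⟫) + ρ ^ 2 := by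
        rw [norm_add_sq_real, real_inner_smul_right, norm_smul, Real.norm_eq_abs,
          abs_of_pos hρpos, hu1, mul_one, real_inner_comm]
      have h3 : ⟪u, projS H z⟫ ≤ c := by
        rw [inner_projS_right H hu z]; exact hc z hz
      have h4 : ‖projS H z‖ < R₀ := lt_of_le_of_lt (norm_projS_le H z) (hXR z hz)
      have h5 : ‖projS H z - x‖ ^ 2 ≤ r ^ 2 := by
        rw [e1, e2, hrdef]
        nlinarith [hρδ, sq_nonneg (c + δ), norm_nonneg (projS H z), hρpos,
          mul_nonneg hρpos.le (sub_nonneg.2 h3)]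
      have h6 := Real.sqrt_le_sqrt h5
      rwa [Real.sqrt_sq (norm_nonneg _), Real.sqrt_sq hrpos.le] at h6
    have hvs : ‖z - projS H z‖ ≤ R₀ :=
      le_of_lt (lt_of_le_of_lt (norm_sub_projS_le H z) (hXR z hz))
    have hmem := mem_cylSet H hrpos hR₀pos x (H.sub_mem hpH hxH) hpr (sub_projS_mem H z) hvs
    rwa [show x + (projS H z - x) + (z - projS H z) = z from by abel] at hmem
  have hw₀mem : x + (-r) • u + 0 ∈ cylSet H r R₀ x := by
    refine mem_cylSet H hrpos hR₀pos x (H.smul_mem _ hu) ?_ (Hᗮ.zero_mem) (by simp [hR₀pos.le])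
    rw [norm_smul, hu1, Real.norm_eq_abs, abs_neg, abs_of_pos hrpos, mul_one]
  have hw₀eq : x + (-r) • u + 0 = (-(ρ + r)) • u := by rw [hxdef]; module
  have hw₀not : x + (-r) • u + 0 ∉ (X.1 : Set (Euc n)) := by
    intro hmem
    have hb := hXR _ hmem
    rw [hw₀eq, norm_smul, Real.norm_eq_abs, hu1, mul_one, abs_neg,
      abs_of_pos (by linarith : (0 : ℝ) < ρ + r)] at hb
    linarith
  have hss : (X.1 : Set (Euc n)) ⊂ (CF.1 : Set (Euc n)) := by
    rw [show (CF.1 : Set (Euc n)) = cylSet H r R₀ x from rfl]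
    exact (Set.ssubset_iff_of_subset hsub).2 ⟨_, hw₀mem, hw₀not⟩
  have hDsub : (dia X : Set (Euc n)) ⊆ cylSet H r R₀ x := by
    have hd := (hmono X CF hss).subset
    rwa [hdiaC] at hd
  obtain ⟨p, v, hpH, hpr, hvH, hvs, hy_eq⟩ := cylSet_mem_elim H hrpos hR₀pos (hDsub hy)
  have hip : ⟪u, p⟫ ≤ r :=
    le_trans (real_inner_le_norm u p) (by rw [hu1, one_mul]; exact hpr)
  have hix : ⟪u, x⟫ = -ρ := by
    rw [hxdef, real_inner_smul_right, real_inner_self_eq_norm_sq, hu1]; ring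
  have hiv : ⟪u, v⟫ = 0 := inner_eq_zero_of_mem H hu hvH
  rw [hy_eq, inner_add_right, inner_add_right, hix, hiv]
  rw [hrdef] at hip
  linarith

lemma transfer
    (hmono : ∀ K L : FullBody n, (K.1 : Set (Euc n)) ⊂ (L.1 : Set (Euc n)) →
      (dia K : Set (Euc n)) ⊂ (dia L : Set (Euc n)))
    (hcyl : ∀ (C : FullBody n) (r s : ℝ) (x : Euc n), 0 < r → 0 < s → x ∈ H →
      (C.1 : Set (Euc n)) = cylSet H r s x → (dia C : Set (Euc n)) = (C.1 : Set (Euc n)))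
    (X : FullBody n) {w : Euc n} (hw : w ∈ H) {c : ℝ}
    (hc : ∀ z ∈ (X.1 : Set (Euc n)), ⟪w, z⟫ ≤ c) :
    ∀ y ∈ (dia X : Set (Euc n)), ⟪w, y⟫ ≤ c := by
  intro y hy
  rcases eq_or_ne w 0 with rfl | hw0
  · obtain ⟨z₀, hz₀⟩ := X.1.nonempty
    have h0 := hc z₀ hz₀
    simp only [inner_zero_left] at h0 ⊢
    exact h0
  · have hnw : 0 < ‖w‖ := norm_pos_iff.2 hw0
    have hw1 : ‖(‖w‖⁻¹ : ℝ) • w‖ = 1 := norm_smul_inv_norm hw0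
    have hwH : (‖w‖⁻¹ : ℝ) • w ∈ H := H.smul_mem _ hw
    have hc' : ∀ z ∈ (X.1 : Set (Euc n)), ⟪(‖w‖⁻¹ : ℝ) • w, z⟫ ≤ ‖w‖⁻¹ * c := by
      intro z hz
      rw [real_inner_smul_left]
      exact mul_le_mul_of_nonneg_left (hc z hz) (inv_nonneg.2 hnw.le)
    have hkey := key_upper hmono hcyl X hwH hw1 hc' hy
    rw [real_inner_smul_left] at hkey
    have h2 : ‖w‖ * (‖w‖⁻¹ * ⟪w, y⟫) ≤ ‖w‖ * (‖w‖⁻¹ * c) :=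
      mul_le_mul_of_nonneg_left hkey hnw.le
    rwa [mul_inv_cancel_left₀ hnw.ne', mul_inv_cancel_left₀ hnw.ne'] at h2

lemma transfer_back
    (hmono : ∀ K L : FullBody n, (K.1 : Set (Euc n)) ⊂ (L.1 : Set (Euc n)) →
      (dia K : Set (Euc n)) ⊂ (dia L : Set (Euc n)))
    (hcyl : ∀ (C : FullBody n) (r s : ℝ) (x : Euc n), 0 < r → 0 < s → x ∈ H →
      (C.1 : Set (Euc n)) = cylSet H r s x → (dia C : Set (Euc n)) = (C.1 : Set (Euc n)))
    (K : FullBody n) {w : Euc n} (hw : w ∈ H) {c : ℝ}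
    (hc : ∀ z ∈ (dia K : Set (Euc n)), ⟪w, z⟫ ≤ c) :
    ∀ z ∈ (K.1 : Set (Euc n)), ⟪w, z⟫ ≤ c := by
  by_contra hcon
  push_neg at hcon
  obtain ⟨k₁, hk₁K, hk₁⟩ := hcon
  set b' : ℝ := ⟪w, k₁⟫ with hb'def
  set t : ℝ := (c + b') / 2 with htdef
  have hct : c < t := by rw [htdef]; linarith
  have htb : t < b' := by rw [htdef]; linarith
  have hlin : IsLinearMap ℝ (fun z : Euc n => ⟪w, z⟫) :=
    ⟨fun a b => inner_add_right w a b, fun m a => by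
      simp only [real_inner_smul_right, smul_eq_mul]⟩
  have hcontw : Continuous (fun z : Euc n => ⟪w, z⟫) :=
    Continuous.inner continuous_const continuous_id
  have hhalfclosed : IsClosed {z : Euc n | t ≤ ⟪w, z⟫} :=
    isClosed_le continuous_const hcontw
  set capSet : Set (Euc n) := (K.1 : Set (Euc n)) ∩ {z | t ≤ ⟪w, z⟫} with hcapdef
  have hcapconv : Convex ℝ capSet := K.1.convex.inter (convex_halfSpace_ge hlin t)
  have hcapcpt : IsCompact capSet := K.1.isCompact.inter_right hhalfclosed
  have hcapne : capSet.Nonempty := ⟨k₁, hk₁K, le_of_lt htb⟩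
  obtain ⟨k₀, hk₀⟩ := K.2
  set Δ : ℝ := ⟪w, k₀ - k₁⟫ with hΔdef
  set lam : ℝ := min 1 ((b' - t) / (|Δ| + 1)) with hlamdef
  have hlam0 : 0 < lam :=
    lt_min one_pos (div_pos (by linarith) (by positivity))
  have hlam1 : lam ≤ 1 := min_le_left _ _
  have hklam : k₁ + lam • (k₀ - k₁) ∈ interior (K.1 : Set (Euc n)) :=
    K.1.convex.add_smul_sub_mem_interior hk₁K hk₀ ⟨hlam0, hlam1⟩
  have hlamD : lam * |Δ| < b' - t := by
    have h1 : lam ≤ (b' - t) / (|Δ| + 1) := min_le_right _ _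
    have h2 : lam * (|Δ| + 1) ≤ (b' - t) / (|Δ| + 1) * (|Δ| + 1) :=
      mul_le_mul_of_nonneg_right h1 (by positivity)
    rw [div_mul_cancel₀ _ (by positivity : (|Δ| + 1 : ℝ) ≠ 0)] at h2
    nlinarith [abs_nonneg Δ, hlam0]
  have hklamt : t < ⟪w, k₁ + lam • (k₀ - k₁)⟫ := by
    rw [inner_add_right, real_inner_smul_right]
    have h3 : -(lam * |Δ|) ≤ lam * Δ := by
      nlinarith [neg_abs_le Δ, hlam0.le]
    rw [← hΔdef, ← hb'def]
    linarith
  have hcapint : (interior capSet).Nonempty := by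
    refine ⟨k₁ + lam • (k₀ - k₁), ?_⟩
    have hopen : IsOpen (interior (K.1 : Set (Euc n)) ∩ {z : Euc n | t < ⟪w, z⟫}) :=
      isOpen_interior.inter (isOpen_lt continuous_const hcontw)
    have hsub2 : interior (K.1 : Set (Euc n)) ∩ {z : Euc n | t < ⟪w, z⟫} ⊆ capSet :=
      fun z hz => ⟨interior_subset hz.1, show t ≤ ⟪w, z⟫ from le_of_lt hz.2⟩
    exact interior_maximal hsub2 hopen ⟨hklam, hklamt⟩
  have hlow : ∃ k' ∈ (K.1 : Set (Euc n)), ⟪w, k'⟫ < t := by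
    by_contra hlow
    push_neg at hlow
    have hbK : ∀ z ∈ (K.1 : Set (Euc n)), ⟪-w, z⟫ ≤ -t := by
      intro z hz
      rw [inner_neg_left]
      have := hlow z hz
      linarith
    have hbM := transfer hmono hcyl K (H.neg_mem hw) hbK
    obtain ⟨y₀, hy₀⟩ := (dia K).nonempty
    have h1 := hbM y₀ hy₀
    have h2 := hc y₀ hy₀
    rw [inner_neg_left] at h1
    linarith
  obtain ⟨k', hk'K, hk't⟩ := hlow
  set capF : FullBody n := ⟨⟨capSet, hcapconv, hcapcpt, hcapne⟩, hcapint⟩ with hcapFdef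
  have hss : (capF.1 : Set (Euc n)) ⊂ (K.1 : Set (Euc n)) := by
    rw [show (capF.1 : Set (Euc n)) = capSet from rfl]
    exact (Set.ssubset_iff_of_subset Set.inter_subset_left).2
      ⟨k', hk'K, fun hmem => (not_le.2 hk't) hmem.2⟩
  have hsubM : (dia capF : Set (Euc n)) ⊆ (dia K : Set (Euc n)) := (hmono capF K hss).subset
  have hcapbound : ∀ z ∈ (capF.1 : Set (Euc n)), ⟪-w, z⟫ ≤ -t := by
    intro z hz
    rw [inner_neg_left]
    have : t ≤ ⟪w, z⟫ := hz.2
    linarith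
  have htrans := transfer hmono hcyl capF (H.neg_mem hw) hcapbound
  obtain ⟨y₁, hy₁⟩ := (dia capF).nonempty
  have h1 := htrans y₁ hy₁
  have h2 := hc y₁ (hsubM hy₁)
  rw [inner_neg_left] at h1
  linarith

end Main

lemma proj_subset (H : Submodule ℝ (Euc n)) (S T : Set (Euc n))
    (hTcpt : IsCompact T) (hTconv : Convex ℝ T)
    (htrans : ∀ w ∈ H, ∀ c : ℝ, (∀ k ∈ T, ⟪w, k⟫ ≤ c) → ∀ z ∈ S, ⟪w, z⟫ ≤ c) :
    projS H '' S ⊆ projS H '' T := by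
  have hcont : Continuous (projS H) := by
    show Continuous fun x : Euc n => ((H.orthogonalProjection x : H) : Euc n)
    exact continuous_subtype_val.comp (H.orthogonalProjection).continuous
  have hlin : IsLinearMap ℝ (projS H) := by
    constructor
    · intro a b; simp [projS]
    · intro m a; simp [projS]
  rintro - ⟨y, hyS, rfl⟩
  by_contra hnot
  have hBconv : Convex ℝ (projS H '' T) := hTconv.is_linear_image hlin
  have hBclosed : IsClosed (projS H '' T) := (hTcpt.image hcont).isClosed
  obtain ⟨f, cu, hfb, hfx⟩ := geometric_hahn_banach_closed_point hBconv hBclosed hnot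
  set v : Euc n := (InnerProductSpace.toDual ℝ (Euc n)).symm f with hvdef
  have hfv : ∀ z : Euc n, ⟪v, z⟫ = f z := fun z => InnerProductSpace.toDual_symm_apply
  set w : Euc n := projS H v with hwdef
  have hwH : w ∈ H := projS_mem H v
  have hinner : ∀ z : Euc n, ⟪w, z⟫ = f (projS H z) := by
    intro z
    have h1 : ⟪w, z⟫ = ⟪w, projS H z⟫ := (inner_projS_right H hwH z).symm
    have h2 : ⟪w, projS H z⟫ = ⟪projS H z, w⟫ := real_inner_comm _ _
    have h3 : ⟪projS H z, w⟫ = ⟪projS H z, v⟫ := inner_projS_right H (projS_mem H z) v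
    have h4 : ⟪projS H z, v⟫ = ⟪v, projS H z⟫ := real_inner_comm _ _
    rw [h1, h2, h3, h4, hfv]
  have hTbound : ∀ k ∈ T, ⟪w, k⟫ ≤ cu := by
    intro k hk
    rw [hinner k]
    exact le_of_lt (hfb _ ⟨k, hk, rfl⟩)
  have hfinal := htrans w hwH cu hTbound y hyS
  rw [hinner y] at hfinal
  linarith [hfx]

end Stmt8Proof


/-- Theorem 1, case of bodies: if `H ∈ G_{n,i}` with `1 ≤ i ≤ n−1` and
`◇ : 𝒦ⁿₙ → 𝒦ⁿ_H` is strictly monotonic, idempotent and invariant on `H`-symmetric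
spherical cylinders, then `◇` is projection invariant. -/
theorem stmt8 {n i : ℕ} (hi1 : 1 ≤ i) (hin : i ≤ n - 1)
    (H : Submodule ℝ (Euc n)) (hHr : Module.finrank ℝ H = i)
    (dia : FullBody n → ConvexBody (Euc n))
    (hcod : ∀ K, SymmWrt H (dia K : Set (Euc n)))
    (hmono : ∀ K L : FullBody n,
      (K.1 : Set (Euc n)) ⊂ (L.1 : Set (Euc n)) → (dia K : Set (Euc n)) ⊂ (dia L : Set (Euc n)))
    (hidem : ∀ (K : FullBody n) (h : (interior (dia K : Set (Euc n))).Nonempty),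
      dia ⟨dia K, h⟩ = dia K)
    (hcyl : ∀ (C : FullBody n) (r s : ℝ) (x : Euc n), 0 < r → 0 < s → x ∈ H →
      (C.1 : Set (Euc n)) = cylSet H r s x → (dia C : Set (Euc n)) = (C.1 : Set (Euc n))) :
    ∀ K : FullBody n, pimg H (dia K : Set (Euc n)) = pimg H (K.1 : Set (Euc n)) := by
  intro K
  unfold pimg
  apply Set.Subset.antisymm
  · exact Stmt8Proof.proj_subset H _ _ K.1.isCompact K.1.convex
      (fun w hw c hbT => Stmt8Proof.transfer hmono hcyl K hw hbT)
  · exact Stmt8Proof.proj_subset H _ _ (dia K).isCompact (dia K).convex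
      (fun w hw c hbT => Stmt8Proof.transfer_back hmono hcyl K hw hbT)
end
end

section
/- Let H be a proper linear subspace of ℝⁿ and ◇ : 𝒦ⁿ → 𝒦ⁿ_H a monotonic map whose restriction to convex bodies is projection invariant ((◇K)|H = K|H for all K ∈ 𝒦ⁿₙ). Then ◇ is projection invariant on all of 𝒦ⁿ. -/
open Set MeasureTheory Metric Pointwise

noncomputable section

section Aux

variable {n : ℕ} (H : Submodule ℝ (Euc n))

lemma projS_norm_le (z : Euc n) : ‖projS H z‖ ≤ ‖z‖ := by
  have := (H.orthogonalProjection).le_of_opNorm_le (Submodule.orthogonalProjectionOnto_norm_le H) z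
  simpa [projS] using this

lemma projS_add (a b : Euc n) : projS H (a + b) = projS H a + projS H b := by
  simp [projS, map_add]

lemma projS_continuous : Continuous (projS H) :=
  continuous_subtype_val.comp (H.orthogonalProjection).continuous

lemma pimg_isClosed (K : ConvexBody (Euc n)) : IsClosed (pimg H (K : Set (Euc n))) :=
  (K.isCompact.image (projS_continuous H)).isClosed

/-- The closed ball of radius `ε` as a convex body. -/
def ballBody (ε : ℝ) (hε : 0 < ε) : ConvexBody (Euc n) :=
  ⟨closedBall 0 ε, convex_closedBall _ _, isCompact_closedBall _ _,
    ⟨0, by simpa using hε.le⟩⟩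

lemma claimA {n : ℕ} (H : Submodule ℝ (Euc n))
    (dia : ConvexBody (Euc n) → ConvexBody (Euc n))
    (hmono : ∀ K L : ConvexBody (Euc n),
      (K : Set (Euc n)) ⊆ (L : Set (Euc n)) → (dia K : Set (Euc n)) ⊆ (dia L : Set (Euc n)))
    (hproj : ∀ K : ConvexBody (Euc n), (interior (K : Set (Euc n))).Nonempty →
      pimg H (dia K : Set (Euc n)) = pimg H (K : Set (Euc n)))
    (K : ConvexBody (Euc n)) :
    pimg H (dia K : Set (Euc n)) ⊆ pimg H (K : Set (Euc n)) := by
  intro y hy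
  rw [← (pimg_isClosed H K).closure_eq, Metric.mem_closure_iff]
  intro ε hε
  have hε2 : 0 < ε / 2 := by linarith
  set Kε : ConvexBody (Euc n) := K + ballBody (ε / 2) hε2 with hKε
  have hKεset : (Kε : Set (Euc n)) = (K : Set (Euc n)) + closedBall 0 (ε / 2) := by
    simp [hKε, ConvexBody.coe_add, ballBody]
    rfl
  obtain ⟨x, hx⟩ := K.nonempty
  have hsub : (K : Set (Euc n)) ⊆ (Kε : Set (Euc n)) := by
    intro a ha
    rw [hKεset]
    exact ⟨a, ha, 0, by simpa using hε2.le, by simp⟩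
  have hint : (interior (Kε : Set (Euc n))).Nonempty := by
    refine ⟨x, ?_⟩
    have hball : Metric.ball x (ε / 2) ⊆ (Kε : Set (Euc n)) := by
      intro z hz
      rw [hKεset]
      refine ⟨x, hx, z - x, ?_, by module⟩
      simpa [dist_eq_norm, norm_sub_rev] using (Metric.mem_ball.mp hz).le
    exact interior_maximal hball Metric.isOpen_ball (Metric.mem_ball_self hε2)
  have hy2 : y ∈ pimg H (Kε : Set (Euc n)) :=
    (hproj Kε hint) ▸ (Set.image_mono (hmono K Kε hsub)) hy
  rw [hKεset] at hy2
  obtain ⟨w, hw, rfl⟩ := hy2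
  obtain ⟨a, ha, b, hb, rfl⟩ := hw
  refine ⟨projS H a, ⟨a, ha, rfl⟩, ?_⟩
  have hd : dist (projS H (a + b)) (projS H a) = ‖projS H b‖ := by
    rw [dist_eq_norm, projS_add]; simp
  rw [hd]
  have hb' : ‖b‖ ≤ ε / 2 := mem_closedBall_zero_iff.mp hb
  have := projS_norm_le H b
  linarith

end Aux

/-- Lemma on reduction to one case: if `◇ : 𝒦ⁿ → 𝒦ⁿ_H` is monotonic and its
restriction to convex bodies is projection invariant, then `◇` is projection invariant. -/
theorem stmt10 {n : ℕ} (H : Submodule ℝ (Euc n)) (hH : H ≠ ⊤)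
    (dia : ConvexBody (Euc n) → ConvexBody (Euc n))
    (hcod : ∀ K, SymmWrt H (dia K : Set (Euc n)))
    (hmono : ∀ K L : ConvexBody (Euc n),
      (K : Set (Euc n)) ⊆ (L : Set (Euc n)) → (dia K : Set (Euc n)) ⊆ (dia L : Set (Euc n)))
    (hproj : ∀ K : ConvexBody (Euc n), (interior (K : Set (Euc n))).Nonempty →
      pimg H (dia K : Set (Euc n)) = pimg H (K : Set (Euc n))) :
    ∀ K : ConvexBody (Euc n), pimg H (dia K : Set (Euc n)) = pimg H (K : Set (Euc n)) := by
  intro K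
  apply Set.Subset.antisymm (claimA H dia hmono hproj K)
  rintro _ ⟨x, hx, rfl⟩
  -- singleton body at x
  set Kx : ConvexBody (Euc n) := ⟨{x}, convex_singleton x, isCompact_singleton, ⟨x, rfl⟩⟩ with hKx
  have hsub : pimg H (dia Kx : Set (Euc n)) ⊆ pimg H (Kx : Set (Euc n)) :=
    claimA H dia hmono hproj Kx
  have hKxset : pimg H (Kx : Set (Euc n)) = {projS H x} := by
    simp [pimg, hKx]
    exact Set.image_singleton (f := projS H) (a := x)
  obtain ⟨z, hz⟩ := (dia Kx).nonempty
  have hz' : projS H z ∈ pimg H (dia Kx : Set (Euc n)) := ⟨z, hz, rfl⟩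
  have heq : projS H z = projS H x := by
    have := hsub hz'
    rw [hKxset] at this
    exact this
  have hmx : (Kx : Set (Euc n)) ⊆ (K : Set (Euc n)) := by
    intro a ha
    rw [hKx] at ha
    simp only [ConvexBody.coe_mk, Set.mem_singleton_iff] at ha
    exact ha ▸ hx
  exact ⟨z, hmono Kx K hmx hz, heq⟩
end
end

section
/- Let ◇ : 𝒦ⁿ² → 𝒦²_{{o}} be a monotonic, mean-width-preserving symmetrization on compact convex subsets of ℝ², invariant on origin-symmetric sets, which maps line segments to line segments. Then for every origin-symmetric line segment J and every x ∈ ℝ², ◇(J + x) = J. -/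
open Set MeasureTheory Metric Pointwise

noncomputable section

/-- The mean width `W(K) = 2∫_{S^{n-1}} h_K(u) dσ(u)`, where `σ` is the rotation invariant
probability measure on the unit sphere (normalized `(n-1)`-dimensional Hausdorff measure)
and `h_K` is the support function of `K`. -/
def meanWidth {n : ℕ} (K : Set (Euc n)) : ℝ :=
  2 * ∫ u in sphere (0 : Euc n) 1, sSup ((fun x => (inner ℝ x u : ℝ)) '' K)
      ∂((μH[(n : ℝ) - 1] (sphere (0 : Euc n) 1))⁻¹ • μH[(n : ℝ) - 1])

namespace Stmt13Aux

open scoped ENNReal NNReal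

abbrev E2 := Euc 2

def mk2 (x y : ℝ) : E2 := (WithLp.equiv 2 (Fin 2 → ℝ)).symm ![x, y]

@[simp] theorem mk2_zero (x y : ℝ) : mk2 x y 0 = x := rfl
@[simp] theorem mk2_one (x y : ℝ) : mk2 x y 1 = y := rfl

theorem ext2 (u v : E2) (h0 : u 0 = v 0) (h1 : u 1 = v 1) : u = v := by
  ext i; fin_cases i <;> assumption

theorem dist2 (u v : E2) : dist u v = Real.sqrt ((u 0 - v 0)^2 + (u 1 - v 1)^2) := by
  rw [EuclideanSpace.dist_eq]
  simp only [Fin.sum_univ_two, Real.dist_eq, sq_abs]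

theorem norm2 (u : E2) : ‖u‖ = Real.sqrt (u 0 ^ 2 + u 1 ^ 2) := by
  rw [EuclideanSpace.norm_eq]
  simp only [Fin.sum_univ_two, Real.norm_eq_abs, sq_abs]

theorem coslip (t s : ℝ) : |Real.cos t - Real.cos s| ≤ |t - s| := by
  rw [Real.cos_sub_cos, abs_mul, abs_mul]
  have h1 : |Real.sin ((t-s)/2)| ≤ |t-s|/2 := by
    have := Real.abs_sin_le_abs (x := (t-s)/2); rwa [abs_div, abs_two] at this
  have h2 : |Real.sin ((t+s)/2)| ≤ 1 := Real.abs_sin_le_one _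
  have h3 : (0:ℝ) ≤ |Real.sin ((t-s)/2)| := abs_nonneg _
  have h5 : |(-2:ℝ)| = 2 := by norm_num
  rw [h5]
  have := mul_le_mul (mul_le_mul_of_nonneg_left h2 (by norm_num : (0:ℝ) ≤ 2)) h1 h3 (by positivity)
  linarith
theorem sinlip (t s : ℝ) : |Real.sin t - Real.sin s| ≤ |t - s| := by
  rw [Real.sin_sub_sin, abs_mul, abs_mul]
  have h1 : |Real.sin ((t-s)/2)| ≤ |t-s|/2 := by
    have := Real.abs_sin_le_abs (x := (t-s)/2); rwa [abs_div, abs_two] at this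
  have h2 : |Real.cos ((t+s)/2)| ≤ 1 := Real.abs_cos_le_one _
  have h3 : (0:ℝ) ≤ |Real.sin ((t-s)/2)| := abs_nonneg _
  have h4 : (0:ℝ) ≤ |Real.cos ((t+s)/2)| := abs_nonneg _
  have h5 : |(2:ℝ)| = 2 := by norm_num
  rw [h5, mul_comm (2:ℝ) _, mul_assoc]
  have := mul_le_mul h1 h2 h4 (by positivity)
  nlinarith

def rotFun (a b : ℝ) (u : E2) : E2 := mk2 (a * u 0 - b * u 1) (b * u 0 + a * u 1)

def rotEquiv (a b : ℝ) (hab : a^2 + b^2 = 1) : E2 ≃ᵢ E2 where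
  toFun := rotFun a b
  invFun := rotFun a (-b)
  left_inv := fun u => by
    apply ext2 <;> simp only [rotFun, mk2_zero, mk2_one] <;>
      [linear_combination (u 0) * hab; linear_combination (u 1) * hab]
  right_inv := fun u => by
    apply ext2 <;> simp only [rotFun, mk2_zero, mk2_one] <;>
      [linear_combination (u 0) * hab; linear_combination (u 1) * hab]
  isometry_toFun := Isometry.of_dist_eq fun u v => by
    rw [dist2, dist2]; congr 1; simp only [rotFun, mk2_zero, mk2_one]
    linear_combination ((u 0 - v 0)^2 + (u 1 - v 1)^2) * hab

theorem rot_sphere (a b : ℝ) (hab : a^2+b^2=1) :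
    (rotEquiv a b hab) ⁻¹' (sphere (0:E2) 1) = sphere (0:E2) 1 := by
  ext u
  have h0 : rotEquiv a b hab u = rotFun a b u := rfl
  simp only [Set.mem_preimage, mem_sphere_zero_iff_norm, h0, norm2, rotFun, mk2_zero, mk2_one]
  have key : (a * u 0 - b * u 1) ^ 2 + (b * u 0 + a * u 1) ^ 2 = u 0 ^ 2 + u 1 ^ 2 := by
    linear_combination (u 0^2 + u 1^2) * hab
  rw [key]

abbrev sph : Set E2 := sphere (0:E2) 1

theorem sph_ne_top : μH[(1:ℝ)] sph ≠ ⊤ := by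
  have hlip : LipschitzWith 2 (fun t : ℝ => mk2 (Real.cos t) (Real.sin t)) := by
    apply LipschitzWith.of_dist_le_mul
    intro t s
    rw [dist2]
    simp only [mk2_zero, mk2_one]
    have h1 := coslip t s
    have h2 := sinlip t s
    have : Real.sqrt ((Real.cos t - Real.cos s)^2 + (Real.sin t - Real.sin s)^2)
        ≤ Real.sqrt ((2 * dist t s)^2) := by
      apply Real.sqrt_le_sqrt
      rw [Real.dist_eq]
      have a1 : (Real.cos t - Real.cos s)^2 ≤ (t - s)^2 := by
        rw [← sq_abs (Real.cos t - Real.cos s), ← sq_abs (t-s)]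
        exact pow_le_pow_left₀ (abs_nonneg _) h1 2
      have a2 : (Real.sin t - Real.sin s)^2 ≤ (t - s)^2 := by
        rw [← sq_abs (Real.sin t - Real.sin s), ← sq_abs (t-s)]
        exact pow_le_pow_left₀ (abs_nonneg _) h2 2
      have a3 : (2*|t-s|)^2 = 4*(t-s)^2 := by rw [mul_pow, sq_abs]; ring
      nlinarith [sq_nonneg (t-s)]
    calc _ ≤ Real.sqrt ((2 * dist t s)^2) := this
      _ = 2 * dist t s := Real.sqrt_sq (by positivity)
  have hsub : sph ⊆ (fun t : ℝ => mk2 (Real.cos t) (Real.sin t)) '' (Icc 0 (2*Real.pi)) := by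
    intro u hu
    have hn : u 0 ^2 + u 1 ^2 = 1 := by
      rw [mem_sphere_zero_iff_norm, norm2] at hu
      nlinarith [Real.sq_sqrt (by positivity : (0:ℝ) ≤ u 0^2 + u 1^2)]
    have hu0 : -1 ≤ u 0 ∧ u 0 ≤ 1 := by constructor <;> nlinarith
    set θ := Real.arccos (u 0) with hθ
    have hcos : Real.cos θ = u 0 := Real.cos_arccos hu0.1 hu0.2
    have hsin : Real.sin θ = |u 1| := by
      rw [hθ, Real.sin_arccos]
      rw [show 1 - u 0^2 = u 1^2 by linarith, Real.sqrt_sq_eq_abs]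
    rcases le_or_gt 0 (u 1) with h1 | h1
    · refine ⟨θ, ⟨Real.arccos_nonneg _, ?_⟩, ?_⟩
      · have := Real.arccos_le_pi (u 0); nlinarith [Real.pi_pos]
      · apply ext2 <;> simp [hcos, hsin, abs_of_nonneg h1]
    · refine ⟨2*Real.pi - θ, ⟨?_, ?_⟩, ?_⟩
      · have := Real.arccos_le_pi (u 0); nlinarith [Real.pi_pos]
      · have := Real.arccos_nonneg (u 0); nlinarith [Real.pi_pos]
      · apply ext2 <;>
          simp [Real.cos_sub, Real.sin_sub, Real.cos_two_pi, Real.sin_two_pi, hcos, hsin,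
            abs_of_neg h1]
  have hle := hlip.hausdorffMeasure_image_le zero_le_one (Icc (0:ℝ) (2*Real.pi))
  rw [hausdorffMeasure_real, Real.volume_Icc] at hle
  have : μH[(1:ℝ)] sph ≤ (2:ℝ≥0∞)^(1:ℝ) * ENNReal.ofReal (2*Real.pi - 0) :=
    le_trans (measure_mono hsub) (by exact_mod_cast hle)
  exact ne_top_of_le_ne_top (by rw [ENNReal.rpow_one]; exact ENNReal.mul_ne_top (by norm_num) ENNReal.ofReal_ne_top) this


theorem sph_ne_zero : μH[(1:ℝ)] sph ≠ 0 := by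
  have hlip : LipschitzWith 1 (fun u : E2 => u 0) := by
    apply LipschitzWith.of_dist_le_mul
    intro u v
    rw [Real.dist_eq, dist2]; push_cast; rw [one_mul]
    rw [show |u 0 - v 0| = Real.sqrt ((u 0 - v 0)^2) from (Real.sqrt_sq_eq_abs _).symm]
    apply Real.sqrt_le_sqrt
    nlinarith [sq_nonneg (u 1 - v 1)]
  have hsub : Icc (-1:ℝ) 1 ⊆ (fun u : E2 => u 0) '' sph := by
    rintro y ⟨hy1, hy2⟩
    refine ⟨mk2 y (Real.sqrt (1 - y^2)), ?_, rfl⟩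
    rw [mem_sphere_zero_iff_norm, norm2]
    simp only [mk2_zero, mk2_one]
    rw [Real.sq_sqrt (by nlinarith)]
    simp
  have h2 : (ENNReal.ofReal 2) ≤ μH[(1:ℝ)] ((fun u : E2 => u 0) '' sph) := by
    calc ENNReal.ofReal 2 = μH[(1:ℝ)] (Icc (-1:ℝ) 1) := by
          rw [hausdorffMeasure_real, Real.volume_Icc]; norm_num
      _ ≤ _ := measure_mono hsub
  have h3 := hlip.hausdorffMeasure_image_le zero_le_one sph
  intro h0
  rw [h0] at h3
  simp only [mul_zero, le_zero_iff] at h3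
  rw [h3] at h2
  simp at h2

theorem integrableOn_sph {f : E2 → ℝ} (hf : Continuous f) : IntegrableOn f sph μH[(1:ℝ)] := by
  obtain ⟨C, hC⟩ := (isCompact_sphere (0:E2) 1).exists_bound_of_continuousOn hf.continuousOn
  have hfin : IsFiniteMeasure (μH[(1:ℝ)].restrict sph) := by
    constructor
    rw [Measure.restrict_apply_univ]
    exact lt_top_iff_ne_top.2 sph_ne_top
  exact Integrable.mono' (integrable_const C) hf.aestronglyMeasurable
    ((ae_restrict_iff' (isClosed_sphere.measurableSet)).2 (ae_of_all _ hC))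

theorem int_comp_isom (e : E2 ≃ᵢ E2) (hS : e ⁻¹' sph = sph) (g : E2 → ℝ) :
    ∫ u in sph, g (e u) ∂μH[(1:ℝ)] = ∫ u in sph, g u ∂μH[(1:ℝ)] := by
  have := (e.measurePreserving_hausdorffMeasure 1).setIntegral_preimage_emb
    e.toHomeomorph.measurableEmbedding g sph
  rwa [hS] at this

theorem neg_preim_sph : (fun u : E2 => -u) ⁻¹' sph = sph := by
  ext u; simp [mem_sphere_zero_iff_norm]

theorem int_inner_zero (x : E2) : ∫ u in sph, (inner ℝ x u : ℝ) ∂μH[(1:ℝ)] = 0 := by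
  have h := int_comp_isom (IsometryEquiv.neg E2) neg_preim_sph (fun u => (inner ℝ x u : ℝ))
  simp only [IsometryEquiv.neg_apply, inner_neg_right] at h
  rw [integral_neg] at h
  linarith

def C0 : ℝ := ∫ u in sph, |u 0| ∂μH[(1:ℝ)]

theorem int_abs_inner (v : E2) : ∫ u in sph, |(inner ℝ v u : ℝ)| ∂μH[(1:ℝ)] = ‖v‖ * C0 := by
  rcases eq_or_ne v 0 with rfl | hv
  · simp
  · set w : E2 := ‖v‖⁻¹ • v with hw
    have hw1 : ‖w‖ = 1 := norm_smul_inv_norm hv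
    have hab : (w 0)^2 + (w 1)^2 = 1 := by
      rw [norm2] at hw1
      nlinarith [Real.sq_sqrt (by positivity : (0:ℝ) ≤ w 0^2 + w 1^2)]
    have hvw : v = ‖v‖ • w := by
      rw [hw, smul_smul, mul_inv_cancel₀ (norm_ne_zero_iff.2 hv), one_smul]
    set e := rotEquiv (w 0) (w 1) hab with he
    have h := int_comp_isom e (rot_sphere _ _ hab) (fun u => |(inner ℝ v u : ℝ)|)
    have hpt : ∀ u : E2, |(inner ℝ v (e u) : ℝ)| = ‖v‖ * |u 0| := by
      intro u
      have h1 : (inner ℝ v (e u) : ℝ) = ‖v‖ * inner ℝ w (e u) := by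
        nth_rewrite 1 [hvw]; rw [real_inner_smul_left]
      have h2 : (inner ℝ w (e u) : ℝ) = u 0 := by
        have : (e u : E2) = rotFun (w 0) (w 1) u := rfl
        rw [this]
        simp only [PiLp.inner_apply, RCLike.inner_apply, conj_trivial, Fin.sum_univ_two,
          rotFun, mk2_zero, mk2_one]
        linear_combination (u 0) * hab
      rw [h1, h2, abs_mul, abs_of_nonneg (norm_nonneg v)]
    calc ∫ u in sph, |(inner ℝ v u : ℝ)| ∂μH[(1:ℝ)]
        = ∫ u in sph, |(inner ℝ v (e u) : ℝ)| ∂μH[(1:ℝ)] := h.symm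
      _ = ∫ u in sph, ‖v‖ * |u 0| ∂μH[(1:ℝ)] := by simp_rw [hpt]
      _ = ‖v‖ * C0 := by rw [integral_const_mul]; rfl

theorem C0_pos : 0 < C0 := by
  have hne : NoAtoms (μH[(1:ℝ)] : Measure E2) := Measure.noAtoms_hausdorff _ one_pos
  have hcont : Continuous fun u : E2 => |u 0| :=
    ((EuclideanSpace.proj (0 : Fin 2) : E2 →L[ℝ] ℝ).continuous).abs
  have hint : IntegrableOn (fun u : E2 => |u 0|) sph μH[(1:ℝ)] := integrableOn_sph hcont
  rw [show C0 = ∫ u in sph, |u 0| ∂μH[(1:ℝ)] from rfl]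
  rw [setIntegral_pos_iff_support_of_nonneg_ae (ae_of_all _ (fun u => abs_nonneg _)) hint]
  -- 0 < μH (support ∩ sph)
  have hzero : μH[(1:ℝ)] ({u : E2 | u 0 = 0} ∩ sph) = 0 := by
    have hsub2 : {u : E2 | u 0 = 0} ∩ sph ⊆ {mk2 0 1, mk2 0 (-1)} := by
      rintro u ⟨h0, hu⟩
      simp only [Set.mem_setOf_eq] at h0
      have hn : u 0 ^2 + u 1 ^2 = 1 := by
        rw [mem_sphere_zero_iff_norm, norm2] at hu
        nlinarith [Real.sq_sqrt (by positivity : (0:ℝ) ≤ u 0^2 + u 1^2)]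
      have h1 : u 1 = 1 ∨ u 1 = -1 := by
        have : (u 1 - 1) * (u 1 + 1) = 0 := by nlinarith
        rcases mul_eq_zero.1 this with h | h
        · left; linarith
        · right; linarith
      rcases h1 with h | h
      · left; apply ext2 <;> simp [h0, h]
      · right; apply ext2 <;> simp [h0, h]
    have : NullSingletonClass (μH[(1:ℝ)] : Measure E2) := Measure.nullSingletonClass_hausdorff _ one_pos
    exact measure_mono_null hsub2 ((Set.toFinite _).measure_zero _)
  have hcover : sph ⊆ (Function.support (fun u : E2 => |u 0|) ∩ sph) ∪ ({u : E2 | u 0 = 0} ∩ sph) := by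
    intro u hu
    rcases eq_or_ne (u 0) 0 with h | h
    · exact Or.inr ⟨h, hu⟩
    · exact Or.inl ⟨by simp [Function.mem_support, abs_eq_zero, h], hu⟩
  by_contra hle
  push_neg at hle
  have h0 : μH[(1:ℝ)] (Function.support (fun u : E2 => |u 0|) ∩ sph) = 0 := le_antisymm hle (zero_le)
  have hunion := measure_union_le (μ := (μH[(1:ℝ)] : Measure E2))
    (Function.support (fun u : E2 => |u 0|) ∩ sph) ({u : E2 | u 0 = 0} ∩ sph)
  rw [h0, hzero] at hunion
  exact sph_ne_zero (le_antisymm (le_trans (measure_mono (μ := (μH[(1:ℝ)] : Measure E2)) hcover) (by simpa using hunion)) (zero_le))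

theorem meanWidth_segment (a b : E2) :
    meanWidth (segment ℝ a b) = (((μH[(1:ℝ)] sph)⁻¹).toReal * C0) * ‖b - a‖ := by
  have hsup : ∀ u : E2, sSup ((fun x => (inner ℝ x u : ℝ)) '' segment ℝ a b)
      = inner ℝ ((2⁻¹:ℝ)•(a+b)) u + |(inner ℝ ((2⁻¹:ℝ)•(b-a)) u : ℝ)| := by
    intro u
    set l : E2 →ₗ[ℝ] ℝ :=
      { toFun := fun x => (inner ℝ x u : ℝ)
        map_add' := fun x y => inner_add_left x y u
        map_smul' := fun r x => real_inner_smul_left x u r } with hl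
    have lmap : (fun x : E2 => (inner ℝ x u : ℝ)) '' segment ℝ a b
        = segment ℝ (inner ℝ a u : ℝ) (inner ℝ b u : ℝ) := by
      have := image_segment ℝ l.toAffineMap a b
      exact this
    rw [lmap, segment_eq_Icc' _ _, csSup_Icc min_le_max]
    rw [real_inner_smul_left, real_inner_smul_left, inner_add_left, inner_sub_left]
    rcases le_total ((inner ℝ a u : ℝ)) ((inner ℝ b u : ℝ)) with h | h
    · rw [max_eq_right h, abs_of_nonneg (by linarith)]; ring
    · rw [max_eq_left h, abs_of_nonpos (by linarith)]; ring
  have hexp : ((2:ℕ) : ℝ) - 1 = (1:ℝ) := by norm_num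
  rw [meanWidth, hexp]
  rw [Measure.restrict_smul, integral_smul_measure]
  simp_rw [hsup]
  rw [integral_add
    (integrableOn_sph (by exact Continuous.inner continuous_const continuous_id))
    (integrableOn_sph (by exact (Continuous.inner continuous_const continuous_id).abs))]
  rw [int_inner_zero, int_abs_inner]
  rw [norm_smul]
  simp only [Real.norm_eq_abs, abs_of_nonneg (by norm_num : (0:ℝ) ≤ 2⁻¹)]
  rw [smul_eq_mul]
  ring

theorem kC_pos : 0 < ((μH[(1:ℝ)] sph)⁻¹).toReal * C0 := by
  apply mul_pos _ C0_pos
  apply ENNReal.toReal_pos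
  · exact ENNReal.inv_ne_zero.2 sph_ne_top
  · exact ENNReal.inv_ne_top.2 sph_ne_zero

theorem seg_mem_iff {z v : E2} : z ∈ segment ℝ (-v) v ↔ ∃ t : ℝ, |t| ≤ 1 ∧ z = t • v := by
  constructor
  · rintro ⟨p, q, hp, hq, hpq, rfl⟩
    refine ⟨q - p, by rw [abs_le]; constructor <;> linarith, by module⟩
  · rintro ⟨t, ht, rfl⟩
    rw [abs_le] at ht
    exact ⟨(1-t)/2, (1+t)/2, by linarith, by linarith, by ring, by module⟩

theorem seg_sym {p q : E2} (h : segment ℝ p q = -segment ℝ p q) : p = -q := by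
  have hmem : ∀ z : E2, z ∈ segment ℝ p q → -z ∈ segment ℝ p q := by
    intro z hz
    rw [h]
    simpa using hz
  obtain ⟨a, b, ha, hb, hab, hp⟩ := hmem p (left_mem_segment ℝ p q)
  obtain ⟨a', b', ha', hb', hab', hq⟩ := hmem q (right_mem_segment ℝ p q)
  have e1 : (1+a) • p = (-b) • q := by linear_combination (norm := module) hp
  have e2 : (1+b') • q = (-a') • p := by linear_combination (norm := module) hq
  rcases eq_or_ne q 0 with rfl | hq0
  · have : (1+a) • p = 0 := by rw [e1, smul_zero]
    rcases smul_eq_zero.1 this with h | h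
    · linarith
    · rw [h, neg_zero]
  · have c1 : ((1+a)*(1+b')) • q = (a'*b) • q := by
      calc ((1+a)*(1+b')) • q = (1+a) • ((1+b') • q) := (smul_smul _ _ _).symm
        _ = (1+a) • ((-a') • p) := by rw [e2]
        _ = (-a') • ((1+a) • p) := smul_comm _ _ _
        _ = (-a') • ((-b) • q) := by rw [e1]
        _ = (a'*b) • q := by rw [smul_smul]; ring_nf
    have c2 : ((1+a)*(1+b') - a'*b) • q = 0 := by
      rw [sub_smul, c1, sub_self]
    have c3 : (1+a)*(1+b') - a'*b = 0 := by
      rcases smul_eq_zero.1 c2 with h | h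
      · exact h
      · exact absurd h hq0
    have hub : a' * b ≤ 1 := mul_le_one₀ (by linarith) (by linarith) (by linarith)
    have hab2 : 0 ≤ a * b' := mul_nonneg ha hb'
    have ha0 : a = 0 := by nlinarith
    have hb1 : b = 1 := by linarith
    rw [ha0, hb1] at e1
    simpa using e1


theorem seg_cpt (a b : E2) : IsCompact (segment ℝ a b) := by
  rw [← convexHull_pair]; exact (Set.toFinite _).isCompact_convexHull ℝ

theorem seg_neg_mem {v z : E2} (h : z ∈ segment ℝ (-v) v) : -z ∈ segment ℝ (-v) v := by
  obtain ⟨t, ht, rfl⟩ := seg_mem_iff.1 h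
  exact seg_mem_iff.2 ⟨-t, by simpa using ht, by module⟩

theorem sum_seg_sym (v w : E2) :
    segment ℝ (-v) v + segment ℝ (-w) w = -(segment ℝ (-v) v + segment ℝ (-w) w) := by
  ext z
  simp only [Set.mem_neg, Set.mem_add]
  constructor
  · rintro ⟨p, hp, q, hq, rfl⟩
    exact ⟨-p, seg_neg_mem hp, -q, seg_neg_mem hq, by module⟩
  · rintro ⟨p, hp, q, hq, hsum⟩
    exact ⟨-p, seg_neg_mem hp, -q, seg_neg_mem hq, by linear_combination (norm := module) -hsum⟩

end Stmt13Aux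


/-- key step in Theorem 3: if `◇ : 𝒦² → 𝒦²_{o}` is a monotonic, mean-width
preserving symmetrization into `o`-symmetric sets, invariant on `o`-symmetric sets, which
maps line segments to line segments, then `◇(J + x) = J` for every `o`-symmetric segment `J`
and every `x ∈ ℝ²`. -/
theorem stmt13 (dia : ConvexBody (Euc 2) → ConvexBody (Euc 2))
    (hcod : ∀ K, (dia K : Set (Euc 2)) = -(dia K : Set (Euc 2)))
    (hmono : ∀ K L : ConvexBody (Euc 2),
      (K : Set (Euc 2)) ⊆ (L : Set (Euc 2)) → (dia K : Set (Euc 2)) ⊆ (dia L : Set (Euc 2)))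
    (hW : ∀ K : ConvexBody (Euc 2),
      meanWidth (dia K : Set (Euc 2)) = meanWidth (K : Set (Euc 2)))
    (hinv : ∀ K : ConvexBody (Euc 2), (K : Set (Euc 2)) = -(K : Set (Euc 2)) → dia K = K)
    (hsegmap : ∀ (K : ConvexBody (Euc 2)) (a b : Euc 2), (K : Set (Euc 2)) = segment ℝ a b →
      ∃ c d : Euc 2, (dia K : Set (Euc 2)) = segment ℝ c d) :
    ∀ (K : ConvexBody (Euc 2)) (c x : Euc 2),
      (K : Set (Euc 2)) = (fun y => x + y) '' segment ℝ (-c) c →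
      (dia K : Set (Euc 2)) = segment ℝ (-c) c := by
  classical
  open Stmt13Aux in
  intro K c x hK
  set kC : ℝ := ((μH[(1:ℝ)] Stmt13Aux.sph)⁻¹).toReal * Stmt13Aux.C0 with hkC
  have getd : ∀ (L : ConvexBody (Euc 2)) (a b : Euc 2), (L : Set (Euc 2)) = segment ℝ a b →
      ∃ d : Euc 2, (dia L : Set (Euc 2)) = segment ℝ (-d) d := by
    intro L a b hL
    obtain ⟨p, q, hpq⟩ := hsegmap L a b hL
    have hsym : segment ℝ p q = -segment ℝ p q := by
      rw [← hpq]; exact hcod L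
    have hpq2 := Stmt13Aux.seg_sym hsym
    exact ⟨q, by rw [hpq, hpq2]⟩
  have hKseg : (K : Set (Euc 2)) = segment ℝ (x + -c) (x + c) := by
    rw [hK, segment_translate_image]
  obtain ⟨d, hd⟩ := getd K (x + -c) (x + c) hKseg
  have normd : ∀ (L : ConvexBody (Euc 2)) (d' a b : Euc 2),
      (dia L : Set (Euc 2)) = segment ℝ (-d') d' → (L : Set (Euc 2)) = segment ℝ a b →
      kC * (2 * ‖d'‖) = kC * ‖b - a‖ := by
    intro L d' a b h1 h2
    have hWL := hW L
    rw [h1, h2, Stmt13Aux.meanWidth_segment, Stmt13Aux.meanWidth_segment] at hWL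
    rw [show d' - -d' = (2:ℝ) • d' by module, norm_smul] at hWL
    rw [← hkC] at hWL
    simp only [Real.norm_ofNat] at hWL
    linarith
  have hdc : ‖d‖ = ‖c‖ := by
    have h1 := normd K d (x + -c) (x + c) hd hKseg
    rw [show x + c - (x + -c) = (2:ℝ) • c by module, norm_smul] at h1
    simp only [Real.norm_ofNat] at h1
    have h2 : kC * (2 * ‖d‖) = kC * (2 * ‖c‖) := by linarith
    have h3 := mul_left_cancel₀ (ne_of_gt Stmt13Aux.kC_pos) h2
    linarith
  rcases eq_or_ne c 0 with rfl | hc0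
  · rw [norm_zero, norm_eq_zero] at hdc
    rw [hd, hdc]
  have hcn : ‖c‖ ≠ 0 := norm_ne_zero_iff.2 hc0
  have key : ∀ n : ℕ, ∃ γ δ : ℝ, d = γ • c + δ • x ∧ |δ| ≤ ((n:ℝ)+1)⁻¹ := by
    intro n
    set lam : ℝ := (n:ℝ) + 1 with hlam
    have hlam0 : (0:ℝ) < lam := by positivity
    have hlam1 : (1:ℝ) ≤ lam := by
      rw [hlam]; nlinarith [Nat.cast_nonneg (α := ℝ) n]
    have hlamne : lam ≠ 0 := ne_of_gt hlam0
    have hinvle : |lam⁻¹| ≤ 1 := by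
      rw [abs_of_nonneg (by positivity)]
      exact inv_le_one_of_one_le₀ hlam1
    set Kn : ConvexBody (Euc 2) :=
      ⟨segment ℝ (x + -(lam • c)) (x + lam • c), convex_segment _ _, Stmt13Aux.seg_cpt _ _,
        ⟨_, left_mem_segment ℝ _ _⟩⟩ with hKndef
    set Mn : ConvexBody (Euc 2) :=
      ⟨segment ℝ (-(lam • c)) (lam • c) + segment ℝ (-x) x,
        (convex_segment _ _).add (convex_segment _ _),
        (Stmt13Aux.seg_cpt _ _).add (Stmt13Aux.seg_cpt _ _),
        Set.Nonempty.add ⟨_, left_mem_segment ℝ _ _⟩ ⟨_, left_mem_segment ℝ _ _⟩⟩ with hMndef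
    have hKn : (Kn : Set (Euc 2)) = segment ℝ (x + -(lam • c)) (x + lam • c) := rfl
    have hMn : (Mn : Set (Euc 2)) = segment ℝ (-(lam • c)) (lam • c) + segment ℝ (-x) x := rfl
    have hsc1 : -c = (-lam⁻¹) • (lam • c) := by
      rw [smul_smul, show -lam⁻¹ * lam = -1 by field_simp, neg_one_smul]
    have hsc2 : c = (lam⁻¹) • (lam • c) := by
      rw [smul_smul, show lam⁻¹ * lam = 1 by field_simp, one_smul]
    have hsub1 : (K : Set (Euc 2)) ⊆ (Kn : Set (Euc 2)) := by
      rw [hKseg, hKn]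
      apply (convex_segment _ _).segment_subset
      · exact (mem_segment_translate ℝ x).2 (Stmt13Aux.seg_mem_iff.2 ⟨-lam⁻¹, by simpa using hinvle, hsc1⟩)
      · exact (mem_segment_translate ℝ x).2 (Stmt13Aux.seg_mem_iff.2 ⟨lam⁻¹, by simpa using hinvle, hsc2⟩)
    have hsub2 : (Kn : Set (Euc 2)) ⊆ (Mn : Set (Euc 2)) := by
      rw [hKn, hMn, ← segment_translate_image ℝ x]
      rintro z ⟨y, hy, rfl⟩
      show x + y ∈ _
      rw [add_comm x y]
      exact Set.add_mem_add hy (Stmt13Aux.seg_mem_iff.2 ⟨1, by norm_num, (one_smul ℝ x).symm⟩)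
    have hMn_sym := hinv Mn (by rw [hMn]; exact Stmt13Aux.sum_seg_sym _ _)
    obtain ⟨e, he⟩ := getd Kn (x + -(lam • c)) (x + lam • c) hKn
    have hne : ‖e‖ = lam * ‖c‖ := by
      have h1 := normd Kn e _ _ he hKn
      rw [show x + lam • c - (x + -(lam • c)) = (2:ℝ) • (lam • c) by module,
        norm_smul, norm_smul] at h1
      simp only [Real.norm_ofNat, Real.norm_eq_abs, abs_of_pos hlam0] at h1
      have h2 : kC * (2 * ‖e‖) = kC * (2 * (lam * ‖c‖)) := by linarith
      have h3 := mul_left_cancel₀ (ne_of_gt Stmt13Aux.kC_pos) h2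
      linarith
    have hd_in : d ∈ segment ℝ (-e) e := by
      rw [← he]
      exact hmono K Kn hsub1 (by rw [hd]; exact right_mem_segment ℝ _ _)
    have he_in : e ∈ (Mn : Set (Euc 2)) := by
      have h1 : e ∈ (dia Kn : Set (Euc 2)) := by
        rw [he]; exact right_mem_segment ℝ _ _
      have h2 := hmono Kn Mn hsub2 h1
      rwa [hMn_sym] at h2
    obtain ⟨t, ht, hdte⟩ := Stmt13Aux.seg_mem_iff.1 hd_in
    rw [hMn] at he_in
    obtain ⟨pa, hpa, qx, hqx, hpq⟩ := Set.mem_add.1 he_in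
    obtain ⟨α, hα, rfl⟩ := Stmt13Aux.seg_mem_iff.1 hpa
    obtain ⟨β, hβ, rfl⟩ := Stmt13Aux.seg_mem_iff.1 hqx
    have htlam : |t| * lam = 1 := by
      have h1 : ‖d‖ = |t| * ‖e‖ := by rw [hdte, norm_smul, Real.norm_eq_abs]
      rw [hdc, hne] at h1
      have h2 : ‖c‖ * (|t| * lam) = ‖c‖ * 1 := by
        rw [mul_one]; linear_combination -h1
      exact mul_left_cancel₀ hcn h2
    have htinv : |t| = lam⁻¹ := by
      have h4 := eq_div_of_mul_eq hlamne htlam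
      rwa [one_div] at h4
    refine ⟨t * α * lam, t * β, ?_, ?_⟩
    · rw [hdte, ← hpq]; module
    · rw [abs_mul]
      calc |t| * |β| ≤ |t| * 1 := mul_le_mul_of_nonneg_left hβ (abs_nonneg t)
        _ = ((n:ℝ)+1)⁻¹ := by rw [mul_one, htinv]
  by_cases hdep : ∃ μr : ℝ, x = μr • c
  · obtain ⟨μr, rfl⟩ := hdep
    obtain ⟨γ, δ, hrep, _⟩ := key 0
    have hrep2 : d = (γ + δ * μr) • c := by rw [hrep]; module
    have hnorm : |γ + δ * μr| * ‖c‖ = ‖c‖ := by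
      rw [← Real.norm_eq_abs, ← norm_smul, ← hrep2, hdc]
    have habs : |γ + δ * μr| = 1 := mul_right_cancel₀ hcn (by rw [hnorm, one_mul])
    rcases (abs_eq zero_le_one).1 habs with h | h
    · rw [hd, hrep2, h, one_smul]
    · rw [hd, hrep2, h, neg_one_smul, neg_neg, segment_symm]
  · obtain ⟨γ, δ, hrep, _⟩ := key 0
    have hδ0 : δ = 0 := by
      by_contra hδ
      obtain ⟨n, hn⟩ := exists_nat_one_div_lt (abs_pos.2 hδ)
      obtain ⟨γ', δ', hrep', hlt⟩ := key n
      have heqc : (γ - γ') • c = (δ' - δ) • x := by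
        have h1 : γ • c + δ • x = γ' • c + δ' • x := by rw [← hrep, ← hrep']
        linear_combination (norm := module) h1
      have hδδ : δ' = δ := by
        by_contra hne2
        apply hdep
        have hsubne : δ' - δ ≠ 0 := sub_ne_zero.2 hne2
        have h2 := congrArg (fun z => (δ' - δ)⁻¹ • z) heqc.symm
        simp only [smul_smul] at h2
        rw [inv_mul_cancel₀ hsubne, one_smul] at h2
        exact ⟨(δ' - δ)⁻¹ * (γ - γ'), h2⟩
      rw [hδδ] at hlt
      rw [← one_div] at hlt
      linarith
    rw [hδ0, zero_smul, add_zero] at hrep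
    have hnorm : |γ| * ‖c‖ = ‖c‖ := by
      rw [← Real.norm_eq_abs, ← norm_smul, ← hrep, hdc]
    have habs : |γ| = 1 := mul_right_cancel₀ hcn (by rw [hnorm, one_mul])
    rcases (abs_eq zero_le_one).1 habs with h | h
    · rw [hd, hrep, h, one_smul]
    · rw [hd, hrep, h, neg_one_smul, neg_neg, segment_symm]
end
end

section
/- There exists a strictly monotonic symmetrization ◇ : 𝒦ⁿₙ → 𝒦ⁿ_{n,{o}} whose natural extension ◇̄ (defined by ◇̄K = ⋂_{m≥1} ◇(K + (1/m)B)) does not agree with ◇ on 𝒦ⁿₙ. Concretely, defining ◇K = B_K if V_n(K) ≤ 1 and ◇K = 2B_K if V_n(K) > 1, where B_K is the origin-centered Euclidean ball with V_n(B_K) = V_n(K), the map ◇ is strictly monotonic but ◇̄K = 2◇K ≠ ◇K whenever V_n(K) = 1. -/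
open Set MeasureTheory Metric Pointwise

noncomputable section

namespace Stmt18

def ubc (n : ℕ) : ENNReal := volume (ball (0 : Euc n) 1)

lemma ubc_ne_zero {n : ℕ} (hn : 1 ≤ n) : ubc n ≠ 0 := by
  haveI : Nonempty (Fin n) := ⟨⟨0, hn⟩⟩
  exact (isOpen_ball.measure_pos volume (nonempty_ball.2 one_pos)).ne'

lemma ubc_ne_top {n : ℕ} : ubc n ≠ ⊤ := measure_ball_lt_top.ne

lemma volCB {n : ℕ} {r : ℝ} (hr : 0 ≤ r) :
    volume (closedBall (0 : Euc n) r) = ENNReal.ofReal (r ^ n) * ubc n := by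
  rw [ubc, Measure.addHaar_closedBall _ _ hr, finrank_euclideanSpace_fin]

/-- The radius of the centered ball of volume `v`. -/
def rad (n : ℕ) (v : ENNReal) : ℝ := ((v / ubc n).toReal) ^ ((n : ℝ)⁻¹)

lemma rad_nonneg {n : ℕ} (v : ENNReal) : 0 ≤ rad n v :=
  Real.rpow_nonneg ENNReal.toReal_nonneg _

lemma rad_pos {n : ℕ} (hn : 1 ≤ n) {v : ENNReal} (h0 : v ≠ 0) (ht : v ≠ ⊤) : 0 < rad n v := by
  apply Real.rpow_pos_of_pos
  apply ENNReal.toReal_pos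
  · simp [ENNReal.div_eq_zero_iff, h0, ubc_ne_top]
  · exact (ENNReal.div_lt_top ht (ubc_ne_zero hn)).ne

lemma vol_rad {n : ℕ} (hn : 1 ≤ n) {v : ENNReal} (h0 : v ≠ 0) (ht : v ≠ ⊤) :
    volume (closedBall (0 : Euc n) (rad n v)) = v := by
  rw [volCB (rad_nonneg v), rad,
    Real.rpow_inv_natCast_pow ENNReal.toReal_nonneg (by omega),
    ENNReal.ofReal_toReal (ENNReal.div_lt_top ht (ubc_ne_zero hn)).ne,
    ENNReal.div_mul_cancel (ubc_ne_zero hn) ubc_ne_top]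

lemma radius_le {n : ℕ} (hn : 1 ≤ n) {a b : ℝ} (ha : 0 ≤ a) (hb : 0 ≤ b)
    (h : volume (closedBall (0 : Euc n) a) ≤ volume (closedBall (0 : Euc n) b)) : a ≤ b := by
  rw [volCB ha, volCB hb, ENNReal.mul_le_mul_iff_left (ubc_ne_zero hn) ubc_ne_top,
    ENNReal.ofReal_le_ofReal_iff (pow_nonneg hb n)] at h
  exact le_of_pow_le_pow_left₀ (by omega) hb h

lemma radius_lt {n : ℕ} {a b : ℝ} (hb : 0 ≤ b)
    (h : volume (closedBall (0 : Euc n) a) < volume (closedBall (0 : Euc n) b)) : a < b := by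
  by_contra hab
  exact absurd (measure_mono (closedBall_subset_closedBall (not_lt.1 hab))) (not_le.2 h)

lemma exists_norm_eq {n : ℕ} (hn : 1 ≤ n) {r : ℝ} (hr : 0 ≤ r) : ∃ x : Euc n, ‖x‖ = r := by
  refine ⟨r • EuclideanSpace.single ⟨0, hn⟩ (1 : ℝ), ?_⟩
  rw [norm_smul, EuclideanSpace.norm_single]
  simp [abs_of_nonneg hr]

lemma cb_ssubset {n : ℕ} (hn : 1 ≤ n) {a b : ℝ} (ha : 0 ≤ a) (hab : a < b) :
    closedBall (0 : Euc n) a ⊂ closedBall (0 : Euc n) b := by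
  obtain ⟨x, hx⟩ := exists_norm_eq hn (ha.trans hab.le)
  refine ⟨closedBall_subset_closedBall hab.le, fun hsub => ?_⟩
  have := hsub (mem_closedBall_zero_iff.2 hx.le)
  rw [mem_closedBall_zero_iff, hx] at this
  exact absurd this (not_le.2 hab)

lemma vol_lt {n : ℕ} {K L : Set (Euc n)} (hKc : IsClosed K) (hKf : volume K ≠ ⊤)
    (hL : Convex ℝ L) (hLi : (interior L).Nonempty) (h : K ⊂ L) : volume K < volume L := by
  obtain ⟨x, hxL, hxK⟩ := exists_of_ssubset h
  obtain ⟨ε, hε, hball⟩ := Metric.mem_nhds_iff.1 (hKc.isOpen_compl.mem_nhds hxK)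
  obtain ⟨y, hy⟩ := hLi
  set t : ℝ := min (1/2) (ε / (2 * (‖y - x‖ + 1))) with htdef
  have hnorm : (0:ℝ) ≤ ‖y - x‖ := norm_nonneg _
  have ht0 : 0 < t := lt_min (by norm_num) (by positivity)
  have ht1 : t < 1 := (min_le_left _ _).trans_lt (by norm_num)
  set z : Euc n := (1 - t) • x + t • y with hzdef
  have hzseg : z ∈ openSegment ℝ x y := ⟨1 - t, t, by linarith, ht0, by ring, rfl⟩
  have hzint : z ∈ interior L := hL.openSegment_self_interior_subset_interior hxL hy hzseg
  have hzball : z ∈ ball x ε := by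
    rw [mem_ball, dist_eq_norm]
    have hz : z - x = t • (y - x) := by
      rw [hzdef]; module
    rw [hz, norm_smul, Real.norm_eq_abs, abs_of_pos ht0]
    have h2 : t ≤ ε / (2 * (‖y - x‖ + 1)) := min_le_right _ _
    have h3 : t * ‖y - x‖ ≤ ε / (2 * (‖y - x‖ + 1)) * ‖y - x‖ :=
      mul_le_mul_of_nonneg_right h2 hnorm
    have h4 : ε / (2 * (‖y - x‖ + 1)) * ‖y - x‖ < ε := by
      rw [div_mul_eq_mul_div, div_lt_iff₀ (by positivity)]
      nlinarith
    linarith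
  set U := interior L ∩ ball x ε with hU
  have hUopen : IsOpen U := isOpen_interior.inter isOpen_ball
  have hz1 : z ∈ U := ⟨hzint, hzball⟩
  have hdisj : Disjoint K U := Set.disjoint_left.2 fun a haK haU => hball haU.2 haK
  calc volume K < volume K + volume U :=
        ENNReal.lt_add_right hKf (hUopen.measure_pos volume ⟨z, hz1⟩).ne'
    _ = volume (K ∪ U) := (measure_union hdisj hUopen.measurableSet).symm
    _ ≤ volume L := measure_mono
        (union_subset h.subset (inter_subset_left.trans interior_subset))

lemma ssubset_add_cb {n : ℕ} (hn : 1 ≤ n) {K : Set (Euc n)} (hK : IsCompact K)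
    (hne : (interior K).Nonempty) {δ : ℝ} (hδ : 0 < δ) :
    K ⊂ K + closedBall (0 : Euc n) δ := by
  have hsub : K ⊆ K + closedBall (0 : Euc n) δ := fun x hx =>
    ⟨x, hx, 0, mem_closedBall_self hδ.le, add_zero x⟩
  refine ⟨hsub, fun hsup => ?_⟩
  -- K has a point of maximal norm, and that norm is positive
  obtain ⟨y, hy⟩ := hne
  obtain ⟨x, hxK, hxmax⟩ := hK.exists_isMaxOn ⟨y, interior_subset hy⟩
    continuous_norm.continuousOn
  obtain ⟨ρ, hρ, hρsub⟩ := Metric.isOpen_iff.1 isOpen_interior y hy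
  obtain ⟨e, he⟩ := exists_norm_eq hn (le_of_lt (by positivity : (0:ℝ) < ρ / 2))
  have hxpos : 0 < ‖x‖ := by
    rcases eq_or_ne (y + e) 0 with h1 | h1
    · have h2 : y - e ≠ 0 := by
        intro h2
        have hy1 : y = -e := eq_neg_of_add_eq_zero_left h1
        have hy2 : y = e := sub_eq_zero.1 h2
        have he0 : e = 0 := by
          have h4 : e + e = 0 := by rw [hy2] at h1; exact h1
          have h5 : (2:ℝ) • e = 0 := by rw [two_smul]; exact h4
          simpa using (smul_eq_zero.1 h5).resolve_left (by norm_num)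
        rw [he0, norm_zero] at he
        linarith
      have hmem : y - e ∈ K := interior_subset (hρsub (by
        simp [mem_ball, dist_self_sub_left, he]; linarith))
      calc (0:ℝ) < ‖y - e‖ := norm_pos_iff.2 h2
        _ ≤ ‖x‖ := hxmax hmem
    · have hmem : y + e ∈ K := interior_subset (hρsub (by
        simp [mem_ball, dist_self_add_left, he]; linarith))
      calc (0:ℝ) < ‖y + e‖ := norm_pos_iff.2 h1
        _ ≤ ‖x‖ := hxmax hmem
  -- the stretched point
  set x' := x + (δ / ‖x‖) • x with hx'
  have hx'mem : x' ∈ K + closedBall (0 : Euc n) δ := by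
    refine ⟨x, hxK, (δ / ‖x‖) • x, ?_, rfl⟩
    rw [mem_closedBall_zero_iff, norm_smul, Real.norm_eq_abs,
      abs_of_nonneg (by positivity), div_mul_cancel₀ _ hxpos.ne']
  have hx'norm : ‖x'‖ = ‖x‖ + δ := by
    have : x' = (1 + δ / ‖x‖) • x := by
      rw [hx', add_smul, one_smul]
    rw [this, norm_smul, Real.norm_eq_abs, abs_of_nonneg (by positivity),
      add_mul, one_mul, div_mul_cancel₀ _ hxpos.ne']
  have hmem' : x' ∈ K := hsup hx'mem
  have h5 : ‖x'‖ ≤ ‖x‖ := hxmax hmem'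
  rw [hx'norm] at h5
  linarith


def vK {n : ℕ} (K : FullBody n) : ENNReal := volume (K.1 : Set (Euc n))

lemma vK_ne_zero {n : ℕ} (K : FullBody n) : vK K ≠ 0 :=
  ((isOpen_interior.measure_pos volume K.2).trans_le
    (measure_mono interior_subset)).ne'

lemma vK_ne_top {n : ℕ} (K : FullBody n) : vK K ≠ ⊤ :=
  K.1.isCompact.measure_lt_top.ne

/-- radius of ball with same volume as K -/
def bR (n : ℕ) (K : FullBody n) : ℝ := rad n (vK K)

lemma bR_nonneg {n : ℕ} (K : FullBody n) : 0 ≤ bR n K := rad_nonneg _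

lemma bR_pos {n : ℕ} (hn : 1 ≤ n) (K : FullBody n) : 0 < bR n K :=
  rad_pos hn (vK_ne_zero K) (vK_ne_top K)

lemma vol_bR {n : ℕ} (hn : 1 ≤ n) (K : FullBody n) :
    volume (closedBall (0 : Euc n) (bR n K)) = vK K :=
  vol_rad hn (vK_ne_zero K) (vK_ne_top K)

/-- radius of the symmetrized body -/
def dR (n : ℕ) (K : FullBody n) : ℝ := if vK K ≤ 1 then bR n K else 2 * bR n K

lemma dR_nonneg {n : ℕ} (K : FullBody n) : 0 ≤ dR n K := by
  unfold dR; split <;> [exact bR_nonneg K; linarith [bR_nonneg K]]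

lemma dR_pos {n : ℕ} (hn : 1 ≤ n) (K : FullBody n) : 0 < dR n K := by
  unfold dR; split <;> [exact bR_pos hn K; linarith [bR_pos hn K]]

/-- the symmetrization -/
def diaMap (n : ℕ) (K : FullBody n) : ConvexBody (Euc n) :=
  ⟨closedBall 0 (dR n K), convex_closedBall _ _, isCompact_closedBall _ _,
    nonempty_closedBall.2 (dR_nonneg K)⟩

lemma diaMap_coe {n : ℕ} (K : FullBody n) :
    (diaMap n K : Set (Euc n)) = closedBall (0 : Euc n) (dR n K) := rfl

lemma vK_lt_vK {n : ℕ} {K L : FullBody n}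
    (h : (K.1 : Set (Euc n)) ⊂ (L.1 : Set (Euc n))) : vK K < vK L :=
  vol_lt K.1.isCompact.isClosed (vK_ne_top K) L.1.convex L.2 h

lemma bR_lt_bR {n : ℕ} (hn : 1 ≤ n) {K L : FullBody n}
    (h : (K.1 : Set (Euc n)) ⊂ (L.1 : Set (Euc n))) : bR n K < bR n L := by
  apply radius_lt (bR_nonneg L)
  rw [vol_bR hn, vol_bR hn]
  exact vK_lt_vK h

lemma dR_lt_dR {n : ℕ} (hn : 1 ≤ n) {K L : FullBody n}
    (h : (K.1 : Set (Euc n)) ⊂ (L.1 : Set (Euc n))) : dR n K < dR n L := by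
  have hb := bR_lt_bR hn h
  have hbK := bR_pos hn K
  have hbL := bR_pos hn L
  have hv := vK_lt_vK h
  unfold dR
  split <;> split <;> rename_i h1 h2
  · linarith
  · linarith
  · exact absurd h2 (not_le.2 ((not_le.1 h1).trans hv))
  · linarith

end Stmt18

/-- there is a strictly monotonic symmetrization `◇ : 𝒦ⁿₙ → 𝒦ⁿ_{n,{o}}`
(namely `◇K = B_K` if `V_n(K) ≤ 1` and `◇K = 2B_K` otherwise, where `B_K` is the centered
ball of the same volume as `K`) whose natural extension `◇̄K = ⋂_m ◇(K + (1/m)B)` satisfies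
`◇̄K = 2◇K ≠ ◇K` whenever `V_n(K) = 1`. -/
theorem stmt18 {n : ℕ} (hn : 1 ≤ n) :
    ∃ dia : FullBody n → ConvexBody (Euc n),
      (∀ K, (dia K : Set (Euc n)) = -(dia K : Set (Euc n)) ∧
        (interior (dia K : Set (Euc n))).Nonempty) ∧
      (∀ K L : FullBody n, (K.1 : Set (Euc n)) ⊂ (L.1 : Set (Euc n)) →
        (dia K : Set (Euc n)) ⊂ (dia L : Set (Euc n))) ∧
      (∀ K : FullBody n, ∃ r : ℝ, 0 < r ∧
        volume (closedBall (0 : Euc n) r) = volume (K.1 : Set (Euc n)) ∧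
        (volume (K.1 : Set (Euc n)) ≤ 1 →
          (dia K : Set (Euc n)) = closedBall (0 : Euc n) r) ∧
        (1 < volume (K.1 : Set (Euc n)) →
          (dia K : Set (Euc n)) = closedBall (0 : Euc n) (2 * r))) ∧
      (∀ K : FullBody n, volume (K.1 : Set (Euc n)) = 1 →
        ∀ Km : ℕ → FullBody n,
          (∀ m : ℕ, ((Km m).1 : Set (Euc n))
            = (K.1 : Set (Euc n)) + closedBall (0 : Euc n) (1 / (m + 1))) →
          (⋂ m : ℕ, (dia (Km m) : Set (Euc n))) = (2 : ℝ) • (dia K : Set (Euc n)) ∧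
          (2 : ℝ) • (dia K : Set (Euc n)) ≠ (dia K : Set (Euc n))) := by
  classical
  refine ⟨Stmt18.diaMap n, ?_, ?_, ?_, ?_⟩
  · -- symmetry and interior
    intro K
    rw [Stmt18.diaMap_coe]
    constructor
    · ext x
      simp only [Set.mem_neg, mem_closedBall_zero_iff, norm_neg]
    · refine ⟨0, ?_⟩
      have : ball (0 : Euc n) (Stmt18.dR n K) ⊆ interior (closedBall 0 (Stmt18.dR n K)) :=
        ball_subset_interior_closedBall
      exact interior_mono (subset_refl _) (this (mem_ball_self (Stmt18.dR_pos hn K)))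
  · -- strict monotonicity
    intro K L h
    rw [Stmt18.diaMap_coe, Stmt18.diaMap_coe]
    exact Stmt18.cb_ssubset hn (Stmt18.dR_nonneg K) (Stmt18.dR_lt_dR hn h)
  · -- the formula
    intro K
    refine ⟨Stmt18.bR n K, Stmt18.bR_pos hn K, Stmt18.vol_bR hn K, fun h1 => ?_, fun h1 => ?_⟩
    · rw [Stmt18.diaMap_coe, Stmt18.dR, if_pos (show Stmt18.vK K ≤ 1 from h1)]
    · rw [Stmt18.diaMap_coe, Stmt18.dR, if_neg (not_le.2 (show 1 < Stmt18.vK K from h1))]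
  · -- the extension
    intro K hvol Km hKm
    have hvK1 : Stmt18.vK K = 1 := hvol
    set r : ℝ := Stmt18.bR n K with hr
    have hr0 : 0 ≤ r := Stmt18.bR_nonneg K
    have hrpos : 0 < r := Stmt18.bR_pos hn K
    have hvolr : volume (closedBall (0 : Euc n) r) = 1 := by
      rw [hr, Stmt18.vol_bR hn K, hvK1]
    have hdRK : Stmt18.dR n K = r := by
      rw [Stmt18.dR, if_pos (le_of_eq hvK1)]
    -- each Km m strictly contains K
    have hssub : ∀ m : ℕ, (K.1 : Set (Euc n)) ⊂ ((Km m).1 : Set (Euc n)) := by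
      intro m
      rw [hKm m]
      exact Stmt18.ssubset_add_cb hn K.1.isCompact K.2 (by positivity)
    have hgt : ∀ m : ℕ, 1 < Stmt18.vK (Km m) := by
      intro m
      rw [← hvK1]
      exact Stmt18.vK_lt_vK (hssub m)
    set ρ : ℕ → ℝ := fun m => Stmt18.bR n (Km m) with hρ
    have hρ0 : ∀ m, 0 ≤ ρ m := fun m => Stmt18.bR_nonneg (Km m)
    have hvolρ : ∀ m, volume (closedBall (0 : Euc n) (ρ m)) = Stmt18.vK (Km m) :=
      fun m => Stmt18.vol_bR hn (Km m)
    have hdRKm : ∀ m, Stmt18.dR n (Km m) = 2 * ρ m := by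
      intro m
      rw [Stmt18.dR, if_neg (not_le.2 (hgt m))]
    -- the intersection of the Km is K
    have hanti : Antitone (fun m => ((Km m).1 : Set (Euc n))) := by
      intro a b hab
      show ((Km b).1 : Set (Euc n)) ⊆ ((Km a).1 : Set (Euc n))
      rw [hKm a, hKm b]
      apply add_subset_add_left
      apply closedBall_subset_closedBall
      apply one_div_le_one_div_of_le (by positivity)
      exact_mod_cast (by omega : a + 1 ≤ b + 1)
    have hiInter : (⋂ m, ((Km m).1 : Set (Euc n))) = (K.1 : Set (Euc n)) := by
      apply Set.Subset.antisymm
      · intro x hx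
        rw [Set.mem_iInter] at hx
        have hK1 : IsClosed (K.1 : Set (Euc n)) := K.1.isCompact.isClosed
        rw [← hK1.closure_eq]
        rw [Metric.mem_closure_iff]
        intro ε hε
        obtain ⟨m, hm⟩ := exists_nat_one_div_lt hε
        have := hx m
        rw [hKm m] at this
        obtain ⟨k, hk, b, hb, hkb⟩ := this
        refine ⟨k, hk, ?_⟩
        rw [mem_closedBall_zero_iff] at hb
        have : dist x k = ‖b‖ := by
          rw [dist_eq_norm, ← hkb]
          simp
        rw [this]
        calc ‖b‖ ≤ 1 / (m + 1) := hb
          _ < ε := hm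
      · intro x hx
        rw [Set.mem_iInter]
        intro m
        rw [hKm m]
        exact ⟨x, hx, 0, mem_closedBall_self (by positivity), add_zero x⟩
    -- the infimum of the volumes is 1
    have hiInf : (⨅ m, Stmt18.vK (Km m)) = 1 := by
      have := Directed.measure_iInter (μ := volume)
        (s := fun m => ((Km m).1 : Set (Euc n)))
        (fun m => (Km m).1.isCompact.isClosed.measurableSet.nullMeasurableSet)
        (hanti.directed_ge)
        ⟨0, (Km 0).1.isCompact.measure_lt_top.ne⟩
      rw [hiInter, hvol] at this
      exact this.symm
    -- r ≤ ρ m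
    have hrρ : ∀ m, r ≤ ρ m := by
      intro m
      apply Stmt18.radius_le hn hr0 (hρ0 m)
      rw [hvolr, hvolρ m]
      exact (hgt m).le
    constructor
    · -- the intersection equals 2 • dia K
      have h2smul : (2 : ℝ) • (Stmt18.diaMap n K : Set (Euc n))
          = closedBall (0 : Euc n) (2 * r) := by
        rw [Stmt18.diaMap_coe, hdRK, smul_closedBall _ _ hr0, smul_zero]
        norm_num
      rw [h2smul]
      ext x
      simp only [Set.mem_iInter, Stmt18.diaMap_coe, mem_closedBall_zero_iff]
      constructor
      · intro hx
        have hx' : ∀ m, ‖x‖ ≤ 2 * ρ m := by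
          intro m
          have := hx m
          rwa [hdRKm m] at this
        set t : ℝ := ‖x‖ / 2 with ht
        have ht0 : 0 ≤ t := by positivity
        have htρ : ∀ m, t ≤ ρ m := fun m => by
          have := hx' m; rw [ht]; linarith
        have hvt : volume (closedBall (0 : Euc n) t) ≤ 1 := by
          rw [← hiInf]
          apply le_iInf
          intro m
          rw [← hvolρ m]
          exact measure_mono (closedBall_subset_closedBall (htρ m))
        have htr : t ≤ r := by
          apply Stmt18.radius_le hn ht0 hr0
          rw [hvolr]
          exact hvt
        rw [ht] at htr
        linarith
      · intro hx m
        rw [hdRKm m]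
        have := hrρ m
        linarith
    · -- 2 • dia K ≠ dia K
      rw [Stmt18.diaMap_coe, hdRK, smul_closedBall _ _ hr0, smul_zero]
      have h2r : ‖(2:ℝ)‖ * r = 2 * r := by
        norm_num
      rw [h2r]
      exact (Stmt18.cb_ssubset hn hr0 (by linarith)).ne'
end
end
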